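/- arXiv:1302.0586 — 4 statements merged into one kernel-verified Lean document; each statement's English description precedes it below -/
import Mathlib

section
/- Let p ≥ 2 and let π_p = 2π(p-1)^{1/p}/(p sin(π/p)). Define sin_p : [0, π_p/2] → [0, (p-1)^{1/p}] implicitly by ∫_0^{sin_p t} ds/(1 - s^p/(p-1))^{1/p} = t. Then I_p := ∫_0^{π_p/2} sin_p(t) dt = ((p-1)^{2/p}/p) · B(2/p, 1 - 1/p), where B(r,s) = ∫_0^1 t^{r-1}(1-t)^{s-1} dt is the Beta function. -/
open MeasureTheory intervalIntegral Set

/-- the integral of the p-sine over a quarter period equals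
`((p-1)^(2/p)/p) * B(2/p, 1 - 1/p)`. -/
theorem stmt_0 (p : ℝ) (hp : 2 ≤ p)
    (πp : ℝ) (hπp : πp = 2 * Real.pi * (p - 1) ^ ((1:ℝ)/p) / (p * Real.sin (Real.pi / p)))
    (sinp : ℝ → ℝ)
    (hsinp : ∀ t ∈ Set.Icc (0:ℝ) (πp/2),
      ∫ s in (0:ℝ)..(sinp t), (1 - s ^ p / (p - 1)) ^ (-(1/p)) = t)
    (hbij : Set.BijOn sinp (Set.Icc (0:ℝ) (πp/2)) (Set.Icc (0:ℝ) ((p - 1) ^ ((1:ℝ)/p)))) :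
    ∫ t in (0:ℝ)..(πp/2), sinp t
      = ((p - 1) ^ ((2:ℝ)/p) / p) *
        ∫ t in (0:ℝ)..1, t ^ ((2:ℝ)/p - 1) * (1 - t) ^ ((1 - 1/p) - 1) := by
  have hp0 : (0:ℝ) < p := by linarith
  have hpne : p ≠ 0 := ne_of_gt hp0
  have hq1 : (1:ℝ) ≤ p - 1 := by linarith
  have hq0 : (0:ℝ) < p - 1 := by linarith
  set c : ℝ := (p - 1) ^ ((1:ℝ)/p) with hc
  have hc1 : 1 ≤ c := Real.one_le_rpow hq1 (by positivity)
  have hc0 : 0 < c := lt_of_lt_of_le one_pos hc1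
  have hcp : c ^ p = p - 1 := by
    rw [hc, ← Real.rpow_mul hq0.le, one_div, inv_mul_cancel₀ hpne, Real.rpow_one]
  set g : ℝ → ℝ := fun s => (1 - s ^ p / (p - 1)) ^ (-(1/p)) with hg
  have hbase : ∀ s : ℝ, 0 ≤ s → s < c → 0 < 1 - s ^ p / (p - 1) := by
    intro s hs hsc
    have h1 : s ^ p < c ^ p := Real.rpow_lt_rpow hs hsc hp0
    rw [hcp] at h1
    rw [sub_pos, div_lt_one hq0]
    exact h1
  have hgpos : ∀ s : ℝ, 0 ≤ s → s < c → 0 < g s := fun s hs hsc =>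
    Real.rpow_pos_of_pos (hbase s hs hsc) _
  -- key lower bound for the base
  have hkey : ∀ s : ℝ, 0 ≤ s → s ≤ c → c ^ (p-1) / (p-1) * (c - s) ≤ 1 - s ^ p / (p - 1) := by
    intro s hs hsc
    have e1 : c ^ p = c * c ^ (p-1) := by
      nth_rewrite 1 [show c * c ^ (p-1) = c ^ (1:ℝ) * c ^ (p-1) by rw [Real.rpow_one]]
      rw [← Real.rpow_add hc0]; congr 1; ring
    have e2 : s ^ p ≤ s * c ^ (p-1) := by
      rcases eq_or_lt_of_le hs with h | h
      · rw [← h, Real.zero_rpow hpne, zero_mul]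
      · have : s ^ p = s * s ^ (p-1) := by
          nth_rewrite 1 [show s * s ^ (p-1) = s ^ (1:ℝ) * s ^ (p-1) by rw [Real.rpow_one]]
          rw [← Real.rpow_add h]; congr 1; ring
        rw [this]
        have := Real.rpow_le_rpow hs hsc (by linarith : (0:ℝ) ≤ p - 1)
        nlinarith
    have h : c ^ (p-1) * (c - s) ≤ (p-1) - s ^ p := by nlinarith [hcp]
    calc c ^ (p-1) / (p-1) * (c - s) = (c ^ (p-1) * (c - s)) / (p-1) := by ring
      _ ≤ ((p-1) - s ^ p) / (p-1) := by gcongr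
      _ = 1 - s ^ p / (p-1) := by field_simp
  have hgmeas : Measurable g := by
    rw [hg]; fun_prop
  have hgcont : ContinuousOn g (Ioo 0 c) := by
    have h1 : ContinuousOn (fun s : ℝ => s ^ p) (Ioo 0 c) := fun s hs =>
      (Real.continuousAt_rpow_const s p (Or.inl hs.1.ne')).continuousWithinAt
    exact (continuousOn_const.sub (h1.div_const _)).rpow_const
      (fun s hs => Or.inl (hbase s hs.1.le hs.2).ne')
  -- integrability of g on [0, c]
  set K : ℝ := (c ^ (p-1) / (p-1)) ^ (-(1/p)) with hK
  have hbnd : ∀ s ∈ Ioo (0:ℝ) c, g s ≤ K * (c - s) ^ (-(1/p)) := by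
    intro s hs
    have h0 : 0 < c ^ (p-1) / (p-1) * (c - s) :=
      mul_pos (div_pos (Real.rpow_pos_of_pos hc0 _) hq0) (sub_pos.2 hs.2)
    have h1 : g s ≤ (c ^ (p-1) / (p-1) * (c - s)) ^ (-(1/p)) :=
      Real.rpow_le_rpow_of_nonpos h0 (hkey s hs.1.le hs.2.le)
        (neg_nonpos.2 (by positivity))
    rwa [Real.mul_rpow (by positivity) (sub_pos.2 hs.2).le] at h1
  have hexp : (-1:ℝ) < -(1/p) := by
    have : 1/p ≤ 1/2 := by
      rw [div_le_div_iff₀ hp0 two_pos]; linarith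
    linarith
  have hbint : IntervalIntegrable (fun s : ℝ => K * (c - s) ^ (-(1/p))) volume 0 c := by
    have h2 := intervalIntegral.intervalIntegrable_rpow' (a := 0) (b := c) hexp
    have h3 := h2.comp_sub_left c
    simp only [sub_zero, sub_self] at h3
    exact (h3.symm).const_mul K
  have hgint : IntervalIntegrable g volume 0 c := by
    rw [intervalIntegrable_iff_integrableOn_Ioo_of_le hc0.le]
    have hbint' : IntegrableOn (fun s : ℝ => K * (c - s) ^ (-(1/p))) (Ioo 0 c) volume :=
      (intervalIntegrable_iff_integrableOn_Ioo_of_le hc0.le).1 hbint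
    refine Integrable.mono hbint' (hgcont.aestronglyMeasurable measurableSet_Ioo) ?_
    filter_upwards [ae_restrict_mem measurableSet_Ioo] with s hs
    rw [Real.norm_eq_abs, Real.norm_eq_abs, abs_of_pos (hgpos s hs.1.le hs.2)]
    exact le_trans (hbnd s hs) (le_abs_self _)
  set F : ℝ → ℝ := fun x => ∫ s in (0:ℝ)..x, g s with hF
  have hsinp' : ∀ t ∈ Icc (0:ℝ) (πp/2), F (sinp t) = t := fun t ht => hsinp t ht
  have hsub : ∀ x1 x2 : ℝ, 0 ≤ x1 → x1 ≤ x2 → x2 ≤ c →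
      IntervalIntegrable g volume x1 x2 := by
    intro x1 x2 h1 h2 h3
    apply hgint.mono_set
    rw [uIcc_of_le h2, uIcc_of_le hc0.le]
    exact Icc_subset_Icc h1 h3
  have hFd : ∀ x ∈ Ioo (0:ℝ) c, HasDerivAt F (g x) x := by
    intro x hx
    exact intervalIntegral.integral_hasDerivAt_right
      (hsub 0 x le_rfl hx.1.le hx.2.le)
      ⟨univ, Filter.univ_mem, hgmeas.aestronglyMeasurable⟩
      ((hgcont x hx).continuousAt (Ioo_mem_nhds hx.1 hx.2))
  have hFmono : StrictMonoOn F (Icc 0 c) := by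
    intro x1 h1 x2 h2 hlt
    have i1 : IntervalIntegrable g volume 0 x1 := hsub 0 x1 le_rfl h1.1 h1.2
    have i2 : IntervalIntegrable g volume x1 x2 := hsub x1 x2 h1.1 hlt.le h2.2
    have hadd : (∫ s in (0:ℝ)..x1, g s) + ∫ s in x1..x2, g s = ∫ s in (0:ℝ)..x2, g s :=
      intervalIntegral.integral_add_adjacent_intervals i1 i2
    have hpos : 0 < ∫ s in x1..x2, g s :=
      intervalIntegral_pos_of_pos_on i2
        (fun s hs => hgpos s (le_trans h1.1 hs.1.le) (lt_of_lt_of_le hs.2 h2.2)) hlt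
    show F x1 < F x2
    simp only [hF]
    linarith
  have hF0 : F 0 = 0 := intervalIntegral.integral_same
  have hπ0 : 0 < πp := by
    rw [hπp]
    apply div_pos
    · exact mul_pos (mul_pos two_pos Real.pi_pos) (Real.rpow_pos_of_pos hq0 _)
    · exact mul_pos hp0 (Real.sin_pos_of_pos_of_lt_pi
        (div_pos Real.pi_pos hp0) (div_lt_self Real.pi_pos (by linarith)))
  have hb2 : (0:ℝ) ≤ πp/2 := by linarith
  have hFc : F c = πp / 2 := by
    obtain ⟨t0, ht0, hst0⟩ := hbij.surjOn (show c ∈ Icc (0:ℝ) c from ⟨hc0.le, le_rfl⟩)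
    have h1 : F c = t0 := by rw [← hst0]; exact hsinp' t0 ht0
    have hx1 : sinp (πp/2) ∈ Icc (0:ℝ) c := hbij.mapsTo ⟨hb2, le_rfl⟩
    have h2 : F (sinp (πp/2)) = πp/2 := hsinp' _ ⟨hb2, le_rfl⟩
    have h3 : F (sinp (πp/2)) ≤ F c :=
      hFmono.monotoneOn hx1 ⟨hc0.le, le_rfl⟩ hx1.2
    have := ht0.2
    rw [h2, h1] at h3
    linarith [h1, h3, ht0.2]
  have himgsub : ∀ x ∈ Ioo (0:ℝ) c, F x ∈ Ioo (0:ℝ) (πp/2) := by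
    intro x hx
    constructor
    · rw [← hF0]
      exact hFmono ⟨le_rfl, hc0.le⟩ ⟨hx.1.le, hx.2.le⟩ hx.1
    · rw [← hFc]
      exact hFmono ⟨hx.1.le, hx.2.le⟩ ⟨hc0.le, le_rfl⟩ hx.2
  have himg : F '' (Ioo 0 c) = Ioo 0 (πp/2) := by
    apply Subset.antisymm
    · rintro t ⟨x, hx, rfl⟩
      exact himgsub x hx
    · intro t ht
      have htIcc : t ∈ Icc (0:ℝ) (πp/2) := ⟨ht.1.le, ht.2.le⟩
      have hy := hbij.mapsTo htIcc
      have hFy : F (sinp t) = t := hsinp' t htIcc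
      refine ⟨sinp t, ⟨?_, ?_⟩, hFy⟩
      · rcases eq_or_lt_of_le hy.1 with h | h
        · exfalso; rw [← h, hF0] at hFy; exact absurd hFy.symm (ne_of_gt ht.1)
        · exact h
      · rcases eq_or_lt_of_le hy.2 with h | h
        · exfalso; rw [h, hFc] at hFy; exact absurd hFy.symm (ne_of_lt ht.2)
        · exact h
  have hsinpF : ∀ x ∈ Ioo (0:ℝ) c, sinp (F x) = x := by
    intro x hx
    have hFx := himgsub x hx
    have h4 : F (sinp (F x)) = F x := hsinp' _ ⟨hFx.1.le, hFx.2.le⟩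
    exact hFmono.injOn (hbij.mapsTo ⟨hFx.1.le, hFx.2.le⟩) ⟨hx.1.le, hx.2.le⟩ h4
  -- LHS equals ∫ x in Ioo 0 c, x * g x
  have hL : (∫ t in (0:ℝ)..(πp/2), sinp t) = ∫ x in Ioo (0:ℝ) c, x * g x := by
    rw [intervalIntegral.integral_of_le hb2, MeasureTheory.integral_Ioc_eq_integral_Ioo,
      ← himg, integral_image_eq_integral_abs_deriv_smul measurableSet_Ioo
        (fun x hx => (hFd x hx).hasDerivWithinAt)
        ((hFmono.injOn).mono Ioo_subset_Icc_self) sinp]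
    apply setIntegral_congr_fun measurableSet_Ioo
    intro x hx
    show |g x| • sinp (F x) = x * g x
    rw [hsinpF x hx, smul_eq_mul, abs_of_pos (hgpos x hx.1.le hx.2), mul_comm]
  -- RHS via the substitution φ x = x^p/(p-1)
  set φ : ℝ → ℝ := fun x => x ^ p / (p - 1) with hφ
  have hφd : ∀ x ∈ Ioo (0:ℝ) c, HasDerivAt φ (p * x ^ (p-1) / (p-1)) x := fun x hx =>
    (Real.hasDerivAt_rpow_const (Or.inl hx.1.ne')).div_const _
  have hφmono : StrictMonoOn φ (Ioo 0 c) := by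
    intro a ha b hb hab
    have : a ^ p < b ^ p := Real.rpow_lt_rpow ha.1.le hab hp0
    exact div_lt_div_of_pos_right this hq0
  have hφimg : φ '' (Ioo 0 c) = Ioo 0 1 := by
    apply Subset.antisymm
    · rintro u ⟨x, hx, rfl⟩
      constructor
      · exact div_pos (Real.rpow_pos_of_pos hx.1 _) hq0
      · rw [div_lt_one hq0, ← hcp]
        exact Real.rpow_lt_rpow hx.1.le hx.2 hp0
    · intro u hu
      refine ⟨c * u ^ ((1:ℝ)/p), ⟨?_, ?_⟩, ?_⟩
      · exact mul_pos hc0 (Real.rpow_pos_of_pos hu.1 _)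
      · have : u ^ ((1:ℝ)/p) < 1 := Real.rpow_lt_one hu.1.le hu.2 (by positivity)
        calc c * u ^ ((1:ℝ)/p) < c * 1 := by
              exact mul_lt_mul_of_pos_left this hc0
          _ = c := mul_one c
      · show (c * u ^ ((1:ℝ)/p)) ^ p / (p - 1) = u
        rw [Real.mul_rpow hc0.le (Real.rpow_nonneg hu.1.le _), hcp,
          ← Real.rpow_mul hu.1.le, one_div, inv_mul_cancel₀ hpne, Real.rpow_one]
        field_simp
  have hR : (∫ t in (0:ℝ)..1, t ^ ((2:ℝ)/p - 1) * (1 - t) ^ ((1 - 1/p) - 1))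
      = p * (p-1) ^ (-((2:ℝ)/p)) * ∫ x in Ioo (0:ℝ) c, x * g x := by
    rw [intervalIntegral.integral_of_le zero_le_one,
      MeasureTheory.integral_Ioc_eq_integral_Ioo, ← hφimg,
      integral_image_eq_integral_abs_deriv_smul measurableSet_Ioo
        (fun x hx => (hφd x hx).hasDerivWithinAt) hφmono.injOn
        (fun t => t ^ ((2:ℝ)/p - 1) * (1 - t) ^ ((1 - 1/p) - 1)),
      ← MeasureTheory.integral_const_mul]
    apply setIntegral_congr_fun measurableSet_Ioo
    intro x hx
    have hx0 : (0:ℝ) < x := hx.1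
    have hxp : (0:ℝ) < x ^ p := Real.rpow_pos_of_pos hx0 p
    have habs : |p * x ^ (p-1) / (p-1)| = p * x ^ (p-1) / (p-1) :=
      abs_of_pos (div_pos (mul_pos hp0 (Real.rpow_pos_of_pos hx0 _)) hq0)
    have hgx : (1 - φ x) ^ ((1 - 1/p) - 1) = g x := by
      have he : ((1:ℝ) - 1/p) - 1 = -(1/p) := by ring
      rw [hφ, hg, he]
    show |p * x ^ (p-1) / (p-1)| • ((φ x) ^ ((2:ℝ)/p - 1) * (1 - φ x) ^ ((1 - 1/p) - 1))
        = p * (p-1) ^ (-((2:ℝ)/p)) * (x * g x)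
    rw [smul_eq_mul, habs, hgx]
    have hco : p * x ^ (p-1) / (p-1) * (φ x) ^ ((2:ℝ)/p - 1)
        = p * (p-1) ^ (-((2:ℝ)/p)) * x := by
      have c1 : (φ x) ^ ((2:ℝ)/p - 1) = (x ^ p) ^ ((2:ℝ)/p - 1) / (p-1) ^ ((2:ℝ)/p - 1) :=
        Real.div_rpow hxp.le hq0.le _
      have c2 : (x ^ p) ^ ((2:ℝ)/p - 1) = x ^ ((2:ℝ) - p) := by
        rw [← Real.rpow_mul hx0.le]
        congr 1
        field_simp
      have c4 : x ^ (p-1) * x ^ ((2:ℝ) - p) = x := by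
        rw [← Real.rpow_add hx0]
        norm_num
      have c5 : (p-1) ^ ((2:ℝ)/p - 1) * (p-1) = (p-1) ^ ((2:ℝ)/p) := by
        rw [← Real.rpow_add_one hq0.ne']
        congr 1; ring
      have c6 : (p-1) ^ (-((2:ℝ)/p)) = ((p-1) ^ ((2:ℝ)/p))⁻¹ := by
        rw [Real.rpow_neg hq0.le]
      have hne1 : (p-1) ^ ((2:ℝ)/p - 1) ≠ 0 := (Real.rpow_pos_of_pos hq0 _).ne'
      have hne2 : (p-1) ^ ((2:ℝ)/p) ≠ 0 := (Real.rpow_pos_of_pos hq0 _).ne'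
      rw [c1, c2, c6, div_mul_div_comm, mul_assoc, c4,
        mul_comm (p-1) ((p-1) ^ ((2:ℝ)/p - 1)), c5, div_eq_mul_inv]
      ring
    linear_combination (g x) * hco
  rw [hL, hR]
  have hone : (p - 1) ^ ((2:ℝ)/p) * (p-1) ^ (-((2:ℝ)/p)) = 1 := by
    rw [← Real.rpow_add hq0]
    norm_num
  have hre : (p - 1) ^ ((2:ℝ)/p) / p * (p * (p-1) ^ (-((2:ℝ)/p)) * ∫ x in Ioo (0:ℝ) c, x * g x)
      = ((p - 1) ^ ((2:ℝ)/p) * (p-1) ^ (-((2:ℝ)/p))) * ((p/p) * ∫ x in Ioo (0:ℝ) c, x * g x) := by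
    ring
  rw [hre, hone, div_self hpne, one_mul, one_mul]
end

section
/- Let f satisfy |x^k f^{(k)}(x)| ≤ c|x|^γ for 0 ≤ k ≤ 6 and all x ≠ 0, with 0 < γ < 1/(p-1), p ≥ 2. Let v : ℝ → ℝ be C¹ and bounded, d > 0 a constant, and F(x) = ∫_0^x f. Then for r sufficiently large and any θ with v(θ) ≠ 0, the function r ↦ F(d^{1/p} r^{1/p} v(θ)) satisfies |∂_r^k F(d^{1/p} r^{1/p} v(θ))| ≤ C r^{-k + (γ+1)/p} for 0 ≤ k ≤ 6, for some constant C independent of r and θ. -/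
open MeasureTheory intervalIntegral

private lemma aux_iterDeriv_hasDerivAt {f : ℝ → ℝ} (hfC6 : ContDiffOn ℝ 6 f {(0:ℝ)}ᶜ)
    {j : ℕ} (hj : j < 6) {x : ℝ} (hx : x ≠ 0) :
    HasDerivAt (iteratedDeriv j f) (iteratedDeriv (j + 1) f x) x := by
  have hopen : IsOpen ({(0:ℝ)}ᶜ) := isOpen_compl_singleton
  have hxmem : x ∈ ({(0:ℝ)}ᶜ : Set ℝ) := hx
  have hmem : ({(0:ℝ)}ᶜ : Set ℝ) ∈ nhds x := hopen.mem_nhds hxmem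
  have hdo : DifferentiableOn ℝ (iteratedDerivWithin j f {(0:ℝ)}ᶜ) {(0:ℝ)}ᶜ :=
    hfC6.differentiableOn_iteratedDerivWithin (by exact_mod_cast hj) hopen.uniqueDiffOn
  have heq : Set.EqOn (iteratedDerivWithin j f {(0:ℝ)}ᶜ) (iteratedDeriv j f) {(0:ℝ)}ᶜ := by
    intro y hy
    simp only [iteratedDerivWithin, iteratedDeriv, iteratedFDerivWithin_of_isOpen j hopen hy]
  have h1 : DifferentiableAt ℝ (iteratedDerivWithin j f {(0:ℝ)}ᶜ) x :=
    (hdo x hxmem).differentiableAt hmem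
  have hdiff : DifferentiableAt ℝ (iteratedDeriv j f) x :=
    h1.congr_of_eventuallyEq (Filter.eventuallyEq_of_mem hmem heq).symm
  rw [iteratedDeriv_succ]
  exact hdiff.hasDerivAt
private lemma aux_X_hasDerivAt {p d w : ℝ} (hd : 0 < d) {s : ℝ} (hs : 0 < s) :
    HasDerivAt (fun t : ℝ => d ^ ((1:ℝ)/p) * t ^ ((1:ℝ)/p) * w)
      (d ^ ((1:ℝ)/p) * ((1/p) * s ^ ((1:ℝ)/p - 1)) * w) s := by
  have h := Real.hasDerivAt_rpow_const (x := s) (p := 1/p) (Or.inl hs.ne')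
  exact (h.const_mul (d ^ ((1:ℝ)/p))).mul_const w

private lemma aux_T_hasDerivAt {f : ℝ → ℝ} (hfC6 : ContDiffOn ℝ 6 f {(0:ℝ)}ᶜ)
    {p d w : ℝ} (hp : 0 < p) (hd : 0 < d) (hw : w ≠ 0)
    {j : ℕ} (hj : j < 6) {s : ℝ} (hs : 0 < s) :
    HasDerivAt (fun t : ℝ => iteratedDeriv j f (d ^ ((1:ℝ)/p) * t ^ ((1:ℝ)/p) * w) *
        (d ^ ((1:ℝ)/p) * t ^ ((1:ℝ)/p) * w) ^ (j+1))
      ((1/p)/s * (iteratedDeriv (j+1) f (d ^ ((1:ℝ)/p) * s ^ ((1:ℝ)/p) * w) *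
          (d ^ ((1:ℝ)/p) * s ^ ((1:ℝ)/p) * w) ^ (j+2)
        + ((j:ℝ)+1) * (iteratedDeriv j f (d ^ ((1:ℝ)/p) * s ^ ((1:ℝ)/p) * w) *
          (d ^ ((1:ℝ)/p) * s ^ ((1:ℝ)/p) * w) ^ (j+1)))) s := by
  have hXs := aux_X_hasDerivAt (p := p) (w := w) hd hs
  have hxne : d ^ ((1:ℝ)/p) * s ^ ((1:ℝ)/p) * w ≠ 0 :=
    mul_ne_zero (mul_ne_zero (Real.rpow_pos_of_pos hd _).ne' (Real.rpow_pos_of_pos hs _).ne') hw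
  have h1 : HasDerivAt (fun t : ℝ => iteratedDeriv j f (d ^ ((1:ℝ)/p) * t ^ ((1:ℝ)/p) * w))
      (iteratedDeriv (j+1) f (d ^ ((1:ℝ)/p) * s ^ ((1:ℝ)/p) * w) *
        (d ^ ((1:ℝ)/p) * ((1/p) * s ^ ((1:ℝ)/p - 1)) * w)) s :=
    by have := (aux_iterDeriv_hasDerivAt hfC6 hj hxne).comp s hXs; exact this
  have h2 : HasDerivAt (fun t : ℝ => (d ^ ((1:ℝ)/p) * t ^ ((1:ℝ)/p) * w) ^ (j+1))
      ((((j:ℝ))+1) * (d ^ ((1:ℝ)/p) * s ^ ((1:ℝ)/p) * w) ^ j *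
        (d ^ ((1:ℝ)/p) * ((1/p) * s ^ ((1:ℝ)/p - 1)) * w)) s := by
    have := hXs.fun_pow (j+1)
    simpa using this
  have h3 := h1.mul h2
  convert h3 using 1
  case e'_4 => rfl
  case e'_5 => rfl
  case e'_8 => rfl
  have hss : s ^ ((1:ℝ)/p - 1) = s ^ ((1:ℝ)/p) / s := by
    rw [Real.rpow_sub hs, Real.rpow_one]
  rw [hss]
  set X := d ^ ((1:ℝ)/p) * s ^ ((1:ℝ)/p) * w with hX
  have hXpow : d ^ ((1:ℝ)/p) * (1 / p * (s ^ ((1:ℝ)/p) / s)) * w = (1/p)/s * X := by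
    rw [hX]; field_simp
  rw [hXpow, pow_succ X (j+1), pow_succ X j]
  field_simp

private lemma aux_sum_identity (a s : ℝ) (hs : s ≠ 0) (m : ℕ) (cf T : ℕ → ℝ)
    (hcf : cf (m+1) = 0) :
    (∑ j ∈ Finset.range (m+1), (cf j * (a/s * (T (j+1) + ((j:ℝ)+1) * T j)) * (s^(m+1))⁻¹ +
      cf j * T j * (-((↑(m+1) : ℝ) * s ^ (m+1-1)) / ((s^(m+1))^2))))
    = ∑ j ∈ Finset.range (m+1+1), (a * (if j = 0 then 0 else cf (j-1)) +
        (((j:ℝ)+1) * a - (↑(m+1) : ℝ)) * cf j) * T j * (s^(m+1+1))⁻¹ := by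
  have h1 : ∀ j ∈ Finset.range (m+1+1),
      (a * (if j = 0 then 0 else cf (j-1)) + (((j:ℝ)+1) * a - (↑(m+1) : ℝ)) * cf j) * T j *
        (s^(m+1+1))⁻¹
      = a * (if j = 0 then 0 else cf (j-1)) * T j * (s^(m+1+1))⁻¹
        + (((j:ℝ)+1) * a - (↑(m+1) : ℝ)) * cf j * T j * (s^(m+1+1))⁻¹ := by
    intro j _; ring
  have h2 : (∑ j ∈ Finset.range (m+1+1),
        a * (if j = 0 then 0 else cf (j-1)) * T j * (s^(m+1+1))⁻¹)
      = ∑ j ∈ Finset.range (m+1), a * cf j * T (j+1) * (s^(m+1+1))⁻¹ := by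
    rw [Finset.sum_range_succ']
    simp
  have h3 : (∑ j ∈ Finset.range (m+1+1),
        (((j:ℝ)+1) * a - (↑(m+1) : ℝ)) * cf j * T j * (s^(m+1+1))⁻¹)
      = ∑ j ∈ Finset.range (m+1), (((j:ℝ)+1) * a - (↑(m+1) : ℝ)) * cf j * T j *
          (s^(m+1+1))⁻¹ := by
    rw [Finset.sum_range_succ, hcf]
    ring
  conv_rhs => rw [Finset.sum_congr rfl h1, Finset.sum_add_distrib]
  rw [h2, h3, ← Finset.sum_add_distrib]
  apply Finset.sum_congr rfl
  intro j _
  have hm : m + 1 - 1 = m := by omega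
  rw [hm]
  field_simp
  ring

/-- derivative estimates for `r ↦ F(d^{1/p} r^{1/p} v(θ))`. -/
theorem stmt_6 (p γ c d : ℝ) (hp : 2 ≤ p) (hγ0 : 0 < γ) (hγ1 : γ < 1 / (p - 1))
    (hc : 0 < c) (hd : 0 < d)
    (f : ℝ → ℝ) (hfC : Continuous f) (hfC6 : ContDiffOn ℝ 6 f {(0:ℝ)}ᶜ)
    (hbound : ∀ x : ℝ, x ≠ 0 → ∀ k : ℕ, k ≤ 6 →
      |x ^ k * iteratedDeriv k f x| ≤ c * |x| ^ γ)
    (v : ℝ → ℝ) (hv : ContDiff ℝ 1 v) (M : ℝ) (hvb : ∀ θ : ℝ, |v θ| ≤ M) :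
    ∃ C r₀ : ℝ, 0 < C ∧ ∀ r ≥ r₀, ∀ θ : ℝ, v θ ≠ 0 → ∀ k : ℕ, k ≤ 6 →
      |iteratedDeriv k
        (fun s : ℝ => ∫ u in (0:ℝ)..(d ^ ((1:ℝ)/p) * s ^ ((1:ℝ)/p) * v θ), f u) r|
        ≤ C * r ^ (-(k:ℝ) + (γ + 1) / p) := by
  have hp0 : 0 < p := by linarith
  -- the inductive formula for derivatives
  have key : ∀ k : ℕ, 1 ≤ k → k ≤ 6 → ∃ cf : ℕ → ℝ, (∀ j, k ≤ j → cf j = 0) ∧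
      ∀ θ : ℝ, v θ ≠ 0 → ∀ s : ℝ, 0 < s →
      iteratedDeriv k
        (fun t : ℝ => ∫ u in (0:ℝ)..(d ^ ((1:ℝ)/p) * t ^ ((1:ℝ)/p) * v θ), f u) s
      = ∑ j ∈ Finset.range k, cf j *
          (iteratedDeriv j f (d ^ ((1:ℝ)/p) * s ^ ((1:ℝ)/p) * v θ) *
            (d ^ ((1:ℝ)/p) * s ^ ((1:ℝ)/p) * v θ) ^ (j+1)) * (s ^ k)⁻¹ := by
    intro k
    induction k with
    | zero => omega
    | succ n ih =>
      rcases Nat.eq_zero_or_pos n with hn | hn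
      · -- base case k = 1
        subst hn
        intro _ _
        refine ⟨fun j => if j = 0 then 1/p else 0,
          by intro j hj; simp [Nat.pos_iff_ne_zero.mp hj], ?_⟩
        intro θ hθ s hs
        have hXs := aux_X_hasDerivAt (p := p) (w := v θ) hd hs
        have hF := (hfC.integral_hasStrictDerivAt 0
          (d ^ ((1:ℝ)/p) * s ^ ((1:ℝ)/p) * v θ)).hasDerivAt
        have hg : HasDerivAt
            (fun t : ℝ => ∫ u in (0:ℝ)..(d ^ ((1:ℝ)/p) * t ^ ((1:ℝ)/p) * v θ), f u)
            (f (d ^ ((1:ℝ)/p) * s ^ ((1:ℝ)/p) * v θ) *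
              (d ^ ((1:ℝ)/p) * ((1/p) * s ^ ((1:ℝ)/p - 1)) * v θ)) s := by have := hF.comp s hXs; exact this
        rw [iteratedDeriv_one, hg.deriv, Finset.sum_range_one]
        simp only [if_pos rfl, iteratedDeriv_zero, pow_one]
        rw [Real.rpow_sub hs, Real.rpow_one]
        field_simp
        simp only [if_true, zero_add, pow_one]
        field_simp
      · -- inductive step
        intro _ hk6
        obtain ⟨m, rfl⟩ : ∃ m, n = m + 1 := ⟨n - 1, by omega⟩
        obtain ⟨cf, hcf0, hcf⟩ := ih (by omega) (by omega)
        refine ⟨fun j => (1/p) * (if j = 0 then 0 else cf (j-1)) +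
            (((j:ℝ)+1) * (1/p) - (↑(m+1) : ℝ)) * cf j, ?_, ?_⟩
        · intro j hj
          have h1 : cf j = 0 := hcf0 j (by omega)
          have h2 : (if j = 0 then (0:ℝ) else cf (j-1)) = 0 := by
            rcases Nat.eq_zero_or_pos j with rfl | hjp
            · simp
            · simp only [if_neg (Nat.pos_iff_ne_zero.mp hjp)]
              exact hcf0 (j-1) (by omega)
          simp [h1, h2]
        · intro θ hθ s hs
          have hev : iteratedDeriv (m+1)
              (fun t : ℝ => ∫ u in (0:ℝ)..(d ^ ((1:ℝ)/p) * t ^ ((1:ℝ)/p) * v θ), f u)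
              =ᶠ[nhds s] (fun t : ℝ => ∑ j ∈ Finset.range (m+1), cf j *
                (iteratedDeriv j f (d ^ ((1:ℝ)/p) * t ^ ((1:ℝ)/p) * v θ) *
                  (d ^ ((1:ℝ)/p) * t ^ ((1:ℝ)/p) * v θ) ^ (j+1)) * (t ^ (m+1))⁻¹) :=
            Filter.eventuallyEq_of_mem (isOpen_Ioi.mem_nhds hs) (fun t ht => hcf θ hθ t ht)
          rw [iteratedDeriv_succ, hev.deriv_eq]
          have hGd : HasDerivAt (fun t : ℝ => ∑ j ∈ Finset.range (m+1), cf j *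
                (iteratedDeriv j f (d ^ ((1:ℝ)/p) * t ^ ((1:ℝ)/p) * v θ) *
                  (d ^ ((1:ℝ)/p) * t ^ ((1:ℝ)/p) * v θ) ^ (j+1)) * (t ^ (m+1))⁻¹)
              (∑ j ∈ Finset.range (m+1),
                (cf j * ((1/p)/s * ((iteratedDeriv (j+1) f
                    (d ^ ((1:ℝ)/p) * s ^ ((1:ℝ)/p) * v θ) *
                    (d ^ ((1:ℝ)/p) * s ^ ((1:ℝ)/p) * v θ) ^ (j+1+1))
                  + ((j:ℝ)+1) * (iteratedDeriv j f (d ^ ((1:ℝ)/p) * s ^ ((1:ℝ)/p) * v θ) *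
                    (d ^ ((1:ℝ)/p) * s ^ ((1:ℝ)/p) * v θ) ^ (j+1)))) * (s ^ (m+1))⁻¹ +
                 cf j * (iteratedDeriv j f (d ^ ((1:ℝ)/p) * s ^ ((1:ℝ)/p) * v θ) *
                    (d ^ ((1:ℝ)/p) * s ^ ((1:ℝ)/p) * v θ) ^ (j+1)) *
                  (-((↑(m+1) : ℝ) * s ^ (m+1-1)) / ((s ^ (m+1)) ^ 2)))) s := by
            refine HasDerivAt.fun_sum fun j hj => ?_
            have hjlt : j < 6 := by
              have := Finset.mem_range.mp hj; omega
            have hTd := aux_T_hasDerivAt hfC6 hp0 hd hθ hjlt hs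
            have hinv : HasDerivAt (fun t : ℝ => (t ^ (m+1))⁻¹)
                (-((↑(m+1) : ℝ) * s ^ (m+1-1)) / ((s ^ (m+1)) ^ 2)) s :=
              (hasDerivAt_pow (m+1) s).inv (pow_ne_zero (m+1) hs.ne')
            exact (hTd.const_mul (cf j)).mul hinv
          rw [hGd.deriv]
          exact aux_sum_identity (1/p) s hs.ne' m cf
            (fun i => iteratedDeriv i f (d ^ ((1:ℝ)/p) * s ^ ((1:ℝ)/p) * v θ) *
              (d ^ ((1:ℝ)/p) * s ^ ((1:ℝ)/p) * v θ) ^ (i+1)) (hcf0 (m+1) le_rfl)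
  -- f vanishes at 0
  have hf0 : f 0 = 0 := by
    have h1 : Filter.Tendsto f (nhdsWithin 0 {(0:ℝ)}ᶜ) (nhds (f 0)) :=
      (hfC.tendsto 0).mono_left nhdsWithin_le_nhds
    have h2 : Filter.Tendsto f (nhdsWithin 0 {(0:ℝ)}ᶜ) (nhds 0) := by
      refine squeeze_zero_norm' (a := fun y => c * |y| ^ γ) ?_ ?_
      · filter_upwards [self_mem_nhdsWithin] with y hy
        have := hbound y hy 0 (by norm_num)
        simpa using this
      · have h3 : Filter.Tendsto (fun y : ℝ => |y|) (nhds (0:ℝ)) (nhds 0) := by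
          simpa using continuous_abs.tendsto (0:ℝ)
        have h4 := (Real.continuousAt_rpow_const 0 γ (Or.inr hγ0.le)).tendsto
        have h5 := h4.comp h3
        rw [Real.zero_rpow hγ0.ne'] at h5
        have h6 := h5.const_mul c
        rw [mul_zero] at h6
        exact (h6.congr fun y => rfl).mono_left nhdsWithin_le_nhds
    exact tendsto_nhds_unique h1 h2
  obtain ⟨cf1, hz1, hf1⟩ := key 1 (by norm_num) (by norm_num)
  obtain ⟨cf2, hz2, hf2⟩ := key 2 (by norm_num) (by norm_num)
  obtain ⟨cf3, hz3, hf3⟩ := key 3 (by norm_num) (by norm_num)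
  obtain ⟨cf4, hz4, hf4⟩ := key 4 (by norm_num) (by norm_num)
  obtain ⟨cf5, hz5, hf5⟩ := key 5 (by norm_num) (by norm_num)
  obtain ⟨cf6, hz6, hf6⟩ := key 6 (by norm_num) (by norm_num)
  set A : ℝ := d ^ ((1:ℝ)/p) with hA
  have hA0 : 0 < A := Real.rpow_pos_of_pos hd _
  set M' : ℝ := max M 0 with hM'
  have hM'0 : 0 ≤ M' := le_max_right _ _
  have hs1 : 0 ≤ ∑ j ∈ Finset.range 1, |cf1 j| := Finset.sum_nonneg fun _ _ => abs_nonneg _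
  have hs2 : 0 ≤ ∑ j ∈ Finset.range 2, |cf2 j| := Finset.sum_nonneg fun _ _ => abs_nonneg _
  have hs3 : 0 ≤ ∑ j ∈ Finset.range 3, |cf3 j| := Finset.sum_nonneg fun _ _ => abs_nonneg _
  have hs4 : 0 ≤ ∑ j ∈ Finset.range 4, |cf4 j| := Finset.sum_nonneg fun _ _ => abs_nonneg _
  have hs5 : 0 ≤ ∑ j ∈ Finset.range 5, |cf5 j| := Finset.sum_nonneg fun _ _ => abs_nonneg _
  have hs6 : 0 ≤ ∑ j ∈ Finset.range 6, |cf6 j| := Finset.sum_nonneg fun _ _ => abs_nonneg _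
  set B : ℝ := 1 + (∑ j ∈ Finset.range 1, |cf1 j|) + (∑ j ∈ Finset.range 2, |cf2 j|)
    + (∑ j ∈ Finset.range 3, |cf3 j|) + (∑ j ∈ Finset.range 4, |cf4 j|)
    + (∑ j ∈ Finset.range 5, |cf5 j|) + (∑ j ∈ Finset.range 6, |cf6 j|) with hB
  have hB1 : 1 ≤ B := by rw [hB]; linarith
  have hAM : 0 ≤ A * M' := mul_nonneg hA0.le hM'0
  have hpow_nn : 0 ≤ (A * M') ^ (γ + 1) := Real.rpow_nonneg hAM _
  set C : ℝ := c * (A * M') ^ (γ + 1) * B + 1 with hC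
  have hCprod : 0 ≤ c * (A * M') ^ (γ + 1) :=  mul_nonneg hc.le hpow_nn
  have hCpos : 0 < C := by
    rw [hC]; nlinarith
  refine ⟨C, 1, hCpos, ?_⟩
  intro r hr θ hθ k hk
  have hr0 : 0 < r := lt_of_lt_of_le one_pos hr
  have hv0 : 0 < |v θ| := abs_pos.mpr hθ
  have hvM : |v θ| ≤ M' := le_trans (hvb θ) (le_max_left _ _)
  have hM0 : 0 < M' := lt_of_lt_of_le hv0 hvM
  have hrp : 0 < r ^ ((1:ℝ)/p) := Real.rpow_pos_of_pos hr0 _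
  have hxne : A * r ^ ((1:ℝ)/p) * v θ ≠ 0 :=
    mul_ne_zero (mul_ne_zero hA0.ne' hrp.ne') hθ
  have hxb : |A * r ^ ((1:ℝ)/p) * v θ| ≤ A * M' * r ^ ((1:ℝ)/p) := by
    rw [abs_mul, abs_mul, abs_of_pos hA0, abs_of_pos hrp]
    calc A * r ^ ((1:ℝ)/p) * |v θ| ≤ A * r ^ ((1:ℝ)/p) * M' :=
          mul_le_mul_of_nonneg_left hvM (mul_nonneg hA0.le hrp.le)
      _ = A * M' * r ^ ((1:ℝ)/p) := by ring
  have hYpos : 0 < A * M' * r ^ ((1:ℝ)/p) := mul_pos (mul_pos hA0 hM0) hrp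
  have hcore : c * |A * r ^ ((1:ℝ)/p) * v θ| ^ γ * |A * r ^ ((1:ℝ)/p) * v θ|
      ≤ c * (A * M') ^ (γ + 1) * r ^ ((γ + 1)/p) := by
    have h1 : |A * r ^ ((1:ℝ)/p) * v θ| ^ γ ≤ (A * M' * r ^ ((1:ℝ)/p)) ^ γ :=
      Real.rpow_le_rpow (abs_nonneg _) hxb hγ0.le
    have h2 : c * |A * r ^ ((1:ℝ)/p) * v θ| ^ γ * |A * r ^ ((1:ℝ)/p) * v θ|
        ≤ c * (A * M' * r ^ ((1:ℝ)/p)) ^ γ * (A * M' * r ^ ((1:ℝ)/p)) :=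
      mul_le_mul (mul_le_mul_of_nonneg_left h1 hc.le) hxb (abs_nonneg _)
        (mul_nonneg hc.le (Real.rpow_nonneg hYpos.le _))
    refine h2.trans (le_of_eq ?_)
    rw [show c * (A * M' * r ^ ((1:ℝ)/p)) ^ γ * (A * M' * r ^ ((1:ℝ)/p))
        = c * ((A * M' * r ^ ((1:ℝ)/p)) ^ γ * (A * M' * r ^ ((1:ℝ)/p))) from by ring,
      ← Real.rpow_add_one hYpos.ne' γ,
      Real.mul_rpow hAM hrp.le, ← Real.rpow_mul hr0.le,
      show (1:ℝ)/p * (γ + 1) = (γ + 1)/p from by ring]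
    ring
  have hTb : ∀ j : ℕ, j ≤ 6 →
      |iteratedDeriv j f (A * r ^ ((1:ℝ)/p) * v θ) * (A * r ^ ((1:ℝ)/p) * v θ) ^ (j+1)|
      ≤ c * (A * M') ^ (γ + 1) * r ^ ((γ + 1)/p) := by
    intro j hj
    have h1 : |iteratedDeriv j f (A * r ^ ((1:ℝ)/p) * v θ) * (A * r ^ ((1:ℝ)/p) * v θ) ^ (j+1)|
        = |(A * r ^ ((1:ℝ)/p) * v θ) ^ j * iteratedDeriv j f (A * r ^ ((1:ℝ)/p) * v θ)|
          * |A * r ^ ((1:ℝ)/p) * v θ| := by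
      rw [pow_succ, show iteratedDeriv j f (A * r ^ ((1:ℝ)/p) * v θ) *
          ((A * r ^ ((1:ℝ)/p) * v θ) ^ j * (A * r ^ ((1:ℝ)/p) * v θ))
          = ((A * r ^ ((1:ℝ)/p) * v θ) ^ j * iteratedDeriv j f (A * r ^ ((1:ℝ)/p) * v θ))
            * (A * r ^ ((1:ℝ)/p) * v θ) from by ring, abs_mul]
    rw [h1]
    exact le_trans (mul_le_mul_of_nonneg_right (hbound _ hxne j hj) (abs_nonneg _)) hcore
  have hrpow : ∀ k : ℕ, r ^ ((γ + 1)/p) * (r ^ k)⁻¹ = r ^ (-(k:ℝ) + (γ + 1)/p) := by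
    intro k
    rw [Real.rpow_add hr0, Real.rpow_neg hr0.le, Real.rpow_natCast]
    ring
  have hmain : ∀ (k : ℕ) (cf : ℕ → ℝ), k ≤ 6 → (∑ j ∈ Finset.range k, |cf j|) ≤ B →
      |∑ j ∈ Finset.range k, cf j *
          (iteratedDeriv j f (A * r ^ ((1:ℝ)/p) * v θ) * (A * r ^ ((1:ℝ)/p) * v θ) ^ (j+1))
          * (r ^ k)⁻¹|
      ≤ C * r ^ (-(k:ℝ) + (γ + 1)/p) := by
    intro k cf hk6 hsum
    have hinvnn : (0:ℝ) ≤ (r ^ k)⁻¹ := inv_nonneg.mpr (pow_nonneg hr0.le _)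
    have hqnn : 0 ≤ c * (A * M') ^ (γ + 1) * r ^ ((γ + 1)/p) :=
      mul_nonneg hCprod (Real.rpow_nonneg hr0.le _)
    have step1 : |∑ j ∈ Finset.range k, cf j *
          (iteratedDeriv j f (A * r ^ ((1:ℝ)/p) * v θ) * (A * r ^ ((1:ℝ)/p) * v θ) ^ (j+1))
          * (r ^ k)⁻¹|
        ≤ ∑ j ∈ Finset.range k, |cf j| * (c * (A * M') ^ (γ + 1) * r ^ ((γ + 1)/p))
            * (r ^ k)⁻¹ := by
      refine le_trans (Finset.abs_sum_le_sum_abs _ _) (Finset.sum_le_sum fun j hj => ?_)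
      rw [abs_mul, abs_mul, abs_inv, abs_pow, abs_of_pos hr0]
      exact mul_le_mul_of_nonneg_right (mul_le_mul_of_nonneg_left
        (hTb j (by have := Finset.mem_range.mp hj; omega)) (abs_nonneg _)) hinvnn
    refine step1.trans ?_
    rw [← Finset.sum_mul, ← Finset.sum_mul]
    have h4 : (∑ j ∈ Finset.range k, |cf j|) * (c * (A * M') ^ (γ + 1) * r ^ ((γ + 1)/p))
          * (r ^ k)⁻¹
        ≤ B * (c * (A * M') ^ (γ + 1) * r ^ ((γ + 1)/p)) * (r ^ k)⁻¹ :=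
      mul_le_mul_of_nonneg_right (mul_le_mul_of_nonneg_right hsum hqnn) hinvnn
    refine h4.trans ?_
    have h5 : B * (c * (A * M') ^ (γ + 1) * r ^ ((γ + 1)/p)) * (r ^ k)⁻¹
        = (c * (A * M') ^ (γ + 1) * B) * (r ^ ((γ + 1)/p) * (r ^ k)⁻¹) := by ring
    rw [h5, hrpow k]
    have h6 : c * (A * M') ^ (γ + 1) * B ≤ C := by rw [hC]; linarith
    exact mul_le_mul_of_nonneg_right h6 (Real.rpow_nonneg hr0.le _)
  interval_cases k
  · -- k = 0
    rw [iteratedDeriv_zero]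
    show |∫ u in (0:ℝ)..(A * r ^ ((1:ℝ)/p) * v θ), f u| ≤ _
    have hfub : ∀ u ∈ Set.uIoc (0:ℝ) (A * r ^ ((1:ℝ)/p) * v θ),
        ‖f u‖ ≤ c * |A * r ^ ((1:ℝ)/p) * v θ| ^ γ := by
      intro u hu
      have habs : |u| ≤ |A * r ^ ((1:ℝ)/p) * v θ| := by
        obtain ⟨h1, h2⟩ := hu
        have hlo : -|A * r ^ ((1:ℝ)/p) * v θ| ≤ min 0 (A * r ^ ((1:ℝ)/p) * v θ) :=
          le_min (by simp [abs_nonneg]; positivity) (neg_abs_le _)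
        have hhi : max 0 (A * r ^ ((1:ℝ)/p) * v θ) ≤ |A * r ^ ((1:ℝ)/p) * v θ| :=
          max_le (abs_nonneg _) (le_abs_self _)
        exact abs_le.mpr ⟨le_trans hlo h1.le, le_trans h2 hhi⟩
      rcases eq_or_ne u 0 with rfl | hu0
      · rw [hf0]
        simpa using mul_nonneg hc.le (Real.rpow_nonneg (abs_nonneg (A * r ^ ((1:ℝ)/p) * v θ)) γ)
      · have hb := hbound u hu0 0 (by norm_num)
        simp only [pow_zero, one_mul, iteratedDeriv_zero] at hb
        rw [Real.norm_eq_abs]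
        exact le_trans hb (mul_le_mul_of_nonneg_left
          (Real.rpow_le_rpow (abs_nonneg u) habs hγ0.le) hc.le)
    have hint := intervalIntegral.norm_integral_le_of_norm_le_const hfub
    rw [Real.norm_eq_abs, sub_zero] at hint
    refine hint.trans ?_
    have he : -((0:ℕ):ℝ) + (γ + 1)/p = (γ + 1)/p := by simp
    rw [he]
    refine hcore.trans ?_
    have h6 : c * (A * M') ^ (γ + 1) ≤ C := by rw [hC]; nlinarith
    exact mul_le_mul_of_nonneg_right h6 (Real.rpow_nonneg hr0.le _)
  · rw [hf1 θ hθ r hr0]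
    exact hmain 1 cf1 (by norm_num) (by rw [hB]; linarith)
  · rw [hf2 θ hθ r hr0]
    exact hmain 2 cf2 (by norm_num) (by rw [hB]; linarith)
  · rw [hf3 θ hθ r hr0]
    exact hmain 3 cf3 (by norm_num) (by rw [hB]; linarith)
  · rw [hf4 θ hθ r hr0]
    exact hmain 4 cf4 (by norm_num) (by rw [hB]; linarith)
  · rw [hf5 θ hθ r hr0]
    exact hmain 5 cf5 (by norm_num) (by rw [hB]; linarith)
  · rw [hf6 θ hθ r hr0]
    exact hmain 6 cf6 (by norm_num) (by rw [hB]; linarith)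
end

section
/- Under the hypotheses of the previous statement, assume additionally x² f'(x) ≤ β₂|x|^{γ+1} for x ≠ 0, where p β₁ > q β₂ > 0 and 1/p + 1/q = 1. Then F̄''(h) ≤ ((β₂/(pβ₁)) − 1/q) h^{-1} F̄'(h) for large h, and hence F̄''(h) ≤ −c h^{-2+(γ+1)/p} for some c > 0 and all sufficiently large h. -/
open MeasureTheory intervalIntegral

private lemma aux_id (p h k b r : ℝ) (hp : p ≠ 0) (hh : h ≠ 0)
    (hr : r = b/p - (1 - 1/p)) :
    -p/(p*h)^2 * k + 1/(p*h) * ((1+b)/(p*h) * k) = r * h⁻¹ * (1/(p*h)*k) := by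
  subst hr; field_simp; ring

set_option maxHeartbeats 1000000 in
/-- concavity estimate for `F̄`. -/
theorem stmt_11 (p q γ d ω β₁ β₂ c c₃ πp h₁ : ℝ) (hp : 2 ≤ p)
    (hq : 1/p + 1/q = 1) (hγ0 : 0 < γ) (hγ1 : γ < 1 / (p - 1))
    (hd : 0 < d) (hω : 0 < ω) (hβ₂ : 0 < β₂) (hβ : q * β₂ < p * β₁)
    (hc : 0 < c) (hc₃ : 0 < c₃)
    (hπp : πp = 2 * Real.pi * (p - 1) ^ ((1:ℝ)/p) / (p * Real.sin (Real.pi / p)))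
    (f : ℝ → ℝ) (hfC : Continuous f) (hfC6 : ContDiffOn ℝ 6 f {(0:ℝ)}ᶜ)
    (hfb : ∀ x : ℝ, x ≠ 0 → ∀ k : ℕ, k ≤ 6 →
      |x ^ k * iteratedDeriv k f x| ≤ c * |x| ^ γ)
    (hfl : ∀ x : ℝ, x ≠ 0 → β₁ * |x| ^ (γ + 1) ≤ x * f x)
    (hfu : ∀ x : ℝ, x ≠ 0 → x ^ 2 * deriv f x ≤ β₂ * |x| ^ (γ + 1))
    (v : ℝ → ℝ) (hv : ContDiff ℝ 1 v) (M : ℝ) (hvb : ∀ θ : ℝ, |v θ| ≤ M)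
    (hvz : Set.Finite {θ ∈ Set.Icc (0:ℝ) (2 * πp) | v θ = 0})
    (hvpos : 0 < ∫ θ in (0:ℝ)..(2 * πp), |v θ| ^ (γ + 1))
    (Fbar : ℝ → ℝ)
    (hFbar : ∀ h : ℝ, Fbar h = ∫ θ in (0:ℝ)..(2 * πp),
      ∫ s in (0:ℝ)..(d ^ ((1:ℝ)/p) * (ω⁻¹ * h) ^ ((1:ℝ)/p) * v θ), f s)
    (hF' : ∀ h ≥ h₁, deriv Fbar h = (1 / (p * h)) * ∫ θ in (0:ℝ)..(2 * πp),
      (d ^ ((1:ℝ)/p) * (ω⁻¹ * h) ^ ((1:ℝ)/p) * v θ) *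
        f (d ^ ((1:ℝ)/p) * (ω⁻¹ * h) ^ ((1:ℝ)/p) * v θ))
    (hFlow : ∀ h ≥ h₁, c₃ * h ^ (-1 + (γ + 1) / p) ≤ deriv Fbar h) :
    ∃ h₀ cc : ℝ, 0 < cc ∧ ∀ h ≥ h₀,
      deriv (deriv Fbar) h ≤ (β₂ / (p * β₁) - 1/q) * h⁻¹ * deriv Fbar h ∧
      deriv (deriv Fbar) h ≤ -cc * h ^ (-2 + (γ + 1) / p) := by
  have hp0 : (0:ℝ) < p := by linarith
  have hq0 : (0:ℝ) < q := by
    have h1 : 1/q = 1 - 1/p := by linarith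
    have h2 : 1/p < 1 := by rw [div_lt_one hp0]; linarith
    have h3 : 0 < 1/q := by rw [h1]; linarith
    exact one_div_pos.mp h3
  have hβ₁ : (0:ℝ) < β₁ := by nlinarith
  have hπp0 : 0 < πp := by
    rw [hπp]
    have h1 : 0 < Real.sin (Real.pi / p) := by
      apply Real.sin_pos_of_pos_of_lt_pi
      · positivity
      · rw [div_lt_iff₀ hp0]; nlinarith [Real.pi_pos]
    have h2 : (0:ℝ) < (p - 1) ^ ((1:ℝ)/p) := Real.rpow_pos_of_pos (by linarith) _
    have := Real.pi_pos
    positivity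
  have hM0 : 0 ≤ M := le_trans (abs_nonneg _) (hvb 0)
  clear hFbar hvz hvpos hγ1 hπp hp
  -- derivative of f away from 0
  have hfd : ∀ x : ℝ, x ≠ 0 → HasDerivAt f (deriv f x) x := by
    intro x hx
    have hopen : IsOpen ({(0:ℝ)}ᶜ) := isOpen_compl_singleton
    have := (hfC6.differentiableOn (by norm_num)).differentiableAt (hopen.mem_nhds hx)
    exact this.hasDerivAt
  have hdfc : ContinuousOn (deriv f) {(0:ℝ)}ᶜ :=
    hfC6.continuousOn_deriv_of_isOpen isOpen_compl_singleton (by norm_num)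
  -- Φ' : derivative of x * f x
  set Φ' : ℝ → ℝ := fun x => if x = 0 then 0 else f x + x * deriv f x with hΦ'def
  have hgc : Continuous (fun x : ℝ => 2 * c * |x| ^ γ) :=
    continuous_const.mul (continuous_abs.rpow_const (fun x => Or.inr hγ0.le))
  have hf00 : f 0 = 0 := by
    have t1 : Filter.Tendsto f (nhdsWithin (0:ℝ) {(0:ℝ)}ᶜ) (nhds (f 0)) :=
      (hfC.tendsto 0).mono_left nhdsWithin_le_nhds
    have t2 : Filter.Tendsto f (nhdsWithin (0:ℝ) {(0:ℝ)}ᶜ) (nhds 0) := by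
      apply squeeze_zero_norm' (a := fun x => c * |x| ^ γ)
      · filter_upwards [self_mem_nhdsWithin] with x hx
        have hx' : x ≠ 0 := hx
        simpa [iteratedDeriv_zero] using hfb x hx' 0 (by norm_num)
      · have hgc' : Continuous (fun x : ℝ => c * |x| ^ γ) :=
          continuous_const.mul (continuous_abs.rpow_const (fun x => Or.inr hγ0.le))
        have := (hgc'.tendsto 0).mono_left (nhdsWithin_le_nhds (s := {(0:ℝ)}ᶜ))
        simpa [Real.zero_rpow (ne_of_gt hγ0)] using this
    exact tendsto_nhds_unique t1 t2
  have hf0b : ∀ x : ℝ, |f x| ≤ c * |x| ^ γ := by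
    intro x
    rcases eq_or_ne x 0 with rfl|hx
    · simp [hf00, Real.zero_rpow (ne_of_gt hγ0)]
    · have := hfb x hx 0 (by norm_num)
      simpa [iteratedDeriv_zero] using this
  have hf1b : ∀ x : ℝ, x ≠ 0 → |x * deriv f x| ≤ c * |x| ^ γ := by
    intro x hx
    have := hfb x hx 1 (by norm_num)
    simpa [iteratedDeriv_one] using this
  have hΦb : ∀ x : ℝ, |Φ' x| ≤ 2 * c * |x| ^ γ := by
    intro x
    rcases eq_or_ne x 0 with rfl|hx
    · simp [hΦ'def, Real.zero_rpow (ne_of_gt hγ0)]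
    · simp only [hΦ'def, if_neg hx]
      calc |f x + x * deriv f x| ≤ |f x| + |x * deriv f x| := abs_add_le _ _
        _ ≤ c * |x| ^ γ + c * |x| ^ γ := add_le_add (hf0b x) (hf1b x hx)
        _ = 2 * c * |x| ^ γ := by ring
  have hΦd : ∀ x : ℝ, HasDerivAt (fun y => y * f y) (Φ' x) x := by
    intro x
    rcases eq_or_ne x 0 with rfl|hx
    · rw [hasDerivAt_iff_tendsto_slope]
      have he : slope (fun y => y * f y) 0 =ᶠ[nhdsWithin (0:ℝ) {(0:ℝ)}ᶜ] f := by
        filter_upwards [self_mem_nhdsWithin] with x hx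
        have hx' : x ≠ 0 := hx
        simp only [slope_def_field]
        field_simp
        ring
      have ht : Filter.Tendsto f (nhdsWithin (0:ℝ) {(0:ℝ)}ᶜ) (nhds 0) := by
        have := (hfC.tendsto 0).mono_left (nhdsWithin_le_nhds (s := {(0:ℝ)}ᶜ))
        rwa [hf00] at this
      have : Filter.Tendsto (slope (fun y => y * f y) 0)
          (nhdsWithin (0:ℝ) {(0:ℝ)}ᶜ) (nhds 0) := ht.congr' he.symm
      simpa [hΦ'def] using this
    · simp only [hΦ'def, if_neg hx]
      refine ((hasDerivAt_id' x).mul (hfd x hx)).congr_deriv ?_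
      ring
  have hΦc : Continuous Φ' := by
    rw [continuous_iff_continuousAt]
    intro x
    rcases eq_or_ne x 0 with rfl|hx
    · have ht : Filter.Tendsto Φ' (nhds (0:ℝ)) (nhds 0) := by
        apply squeeze_zero_norm hΦb
        have := hgc.tendsto 0
        simpa [Real.zero_rpow (ne_of_gt hγ0)] using this
      have : Φ' 0 = 0 := by simp [hΦ'def]
      unfold ContinuousAt
      rw [this]; exact ht
    · have hco : ContinuousOn (fun y => f y + y * deriv f y) {(0:ℝ)}ᶜ :=
        (hfC.continuousOn).add (continuousOn_id.mul hdfc)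
      have hca := hco.continuousAt (isOpen_compl_singleton.mem_nhds hx)
      apply hca.congr
      filter_upwards [isOpen_compl_singleton.mem_nhds hx] with y hy
      have hy' : y ≠ 0 := hy
      simp [hΦ'def, hy']
  have hptx : ∀ x : ℝ, Φ' x * x ≤ (1 + β₂/β₁) * (x * f x) := by
    intro x
    rcases eq_or_ne x 0 with rfl|hx0
    · simp [hΦ'def]
    · simp only [hΦ'def, if_neg hx0]
      have h3 := hfu x hx0
      have hA := hfl x hx0
      have h2 : β₂ * |x| ^ (γ + 1) ≤ (β₂/β₁) * (x * f x) := by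
        have heq : β₂ * |x| ^ (γ + 1) = (β₂/β₁) * (β₁ * |x| ^ (γ + 1)) := by
          field_simp
        rw [heq]
        exact mul_le_mul_of_nonneg_left hA (div_nonneg hβ₂.le hβ₁.le)
      have h4 : x^2 * deriv f x ≤ (β₂/β₁) * (x * f x) := h3.trans h2
      nlinarith [h4]
  -- the radial factor u and its derivative
  set u : ℝ → ℝ := fun h => d ^ ((1:ℝ)/p) * (ω⁻¹ * h) ^ ((1:ℝ)/p) with hudef
  have hupos : ∀ h : ℝ, 0 < h → 0 < u h := by
    intro h hh
    have : (0:ℝ) < ω⁻¹ * h := by positivity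
    simp only [hudef]
    positivity
  have hud : ∀ h : ℝ, 0 < h → HasDerivAt u (u h / (p * h)) h := by
    intro h hh
    have hωh : (0:ℝ) < ω⁻¹ * h := by positivity
    have h1 : HasDerivAt (fun h : ℝ => ω⁻¹ * h) ω⁻¹ h := by
      simpa using (hasDerivAt_id h).const_mul ω⁻¹
    have h2 : HasDerivAt (fun h : ℝ => (ω⁻¹ * h) ^ ((1:ℝ)/p))
        ((((1:ℝ)/p) * (ω⁻¹ * h) ^ ((1:ℝ)/p - 1)) * ω⁻¹) h :=
      (Real.hasDerivAt_rpow_const (Or.inl (ne_of_gt hωh))).comp h h1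
    have h3 := h2.const_mul (d ^ ((1:ℝ)/p))
    refine h3.congr_deriv ?_
    simp only [hudef]
    rw [Real.rpow_sub hωh, Real.rpow_one]
    have hd' : (0:ℝ) < d ^ ((1:ℝ)/p) := Real.rpow_pos_of_pos hd _
    field_simp
  have hwd : ∀ θ : ℝ, ∀ h : ℝ, 0 < h →
      HasDerivAt (fun h => u h * v θ) (u h * v θ / (p * h)) h := by
    intro θ h hh
    have := (hud h hh).mul_const (v θ)
    refine this.congr_deriv ?_
    ring
  -- K and continuity of integrands
  set K : ℝ → ℝ := fun h => ∫ θ in (0:ℝ)..(2 * πp), (u h * v θ) * f (u h * v θ) with hKdef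
  have hvc : Continuous v := hv.continuous
  have hcontθ : ∀ h : ℝ, Continuous (fun θ => (u h * v θ) * f (u h * v θ)) := by
    intro h
    exact ((continuous_const.mul hvc).mul (hfC.comp (continuous_const.mul hvc)))
  have hcontθ' : ∀ h : ℝ, Continuous (fun θ => Φ' (u h * v θ) * (u h * v θ / (p * h))) := by
    intro h
    exact (hΦc.comp (continuous_const.mul hvc)).mul ((continuous_const.mul hvc).div_const _)
  have hKF : ∀ h : ℝ, h₁ ≤ h → deriv Fbar h = 1 / (p * h) * K h := by
    intro h hh
    rw [hF' h hh]
  -- nonnegativity of the integrand of K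
  have hxfx : ∀ x : ℝ, 0 ≤ x * f x := by
    intro x
    rcases eq_or_ne x 0 with rfl|hx
    · simp
    · refine le_trans ?_ (hfl x hx)
      positivity
  have hK0 : ∀ h : ℝ, 0 ≤ K h := by
    intro h
    apply intervalIntegral.integral_nonneg (by linarith : (0:ℝ) ≤ 2 * πp)
    intro θ _
    exact hxfx _
  -- derivative of K
  have hKd : ∀ h : ℝ, 1 ≤ h → HasDerivAt K
      (∫ θ in (0:ℝ)..(2 * πp), Φ' (u h * v θ) * (u h * v θ / (p * h))) h := by
    intro h₀ hh₀
    have hh0 : (0:ℝ) < h₀ := by linarith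
    set B : ℝ := d ^ ((1:ℝ)/p) * (ω⁻¹ * (2 * h₀)) ^ ((1:ℝ)/p) * (M + 1) with hBdef
    have hB0 : 0 < B := by
      have : (0:ℝ) < ω⁻¹ * (2 * h₀) := by positivity
      simp only [hBdef]
      positivity
    have hball : ∀ h ∈ Metric.ball h₀ (h₀/2), h₀/2 < h ∧ h < 2 * h₀ := by
      intro h hb
      rw [Metric.mem_ball, Real.dist_eq, abs_lt] at hb
      constructor <;> linarith [hb.1, hb.2]
    have hwB : ∀ θ : ℝ, ∀ h ∈ Metric.ball h₀ (h₀/2), |u h * v θ| ≤ B := by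
      intro θ h hb
      obtain ⟨hb1, hb2⟩ := hball h hb
      have hh : 0 < h := by linarith
      have hu1 : 0 < u h := hupos h hh
      rw [abs_mul, abs_of_pos hu1]
      have h2 : u h ≤ d ^ ((1:ℝ)/p) * (ω⁻¹ * (2 * h₀)) ^ ((1:ℝ)/p) := by
        apply mul_le_mul_of_nonneg_left _ (Real.rpow_nonneg hd.le _)
        apply Real.rpow_le_rpow (by positivity) _ (by positivity)
        exact mul_le_mul_of_nonneg_left hb2.le (inv_pos.mpr hω).le
      calc u h * |v θ| ≤ (d ^ ((1:ℝ)/p) * (ω⁻¹ * (2 * h₀)) ^ ((1:ℝ)/p)) * (M + 1) := by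
            apply mul_le_mul h2 (by linarith [hvb θ]) (abs_nonneg _)
            positivity
        _ = B := rfl
    have hres := intervalIntegral.hasDerivAt_integral_of_dominated_loc_of_deriv_le
      (F := fun h θ => (u h * v θ) * f (u h * v θ))
      (F' := fun h θ => Φ' (u h * v θ) * (u h * v θ / (p * h)))
      (x₀ := h₀) (a := (0:ℝ)) (b := 2 * πp) (μ := MeasureTheory.volume)
      (bound := fun _ => 2 * c * B ^ γ * (B / (p * (h₀/2))))
      (Metric.ball_mem_nhds h₀ (by positivity : (0:ℝ) < h₀/2))
      (Filter.Eventually.of_forall fun h => (hcontθ h).aestronglyMeasurable)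
      ((hcontθ h₀).intervalIntegrable _ _)
      ((hcontθ' h₀).aestronglyMeasurable)
      ?_ (intervalIntegrable_const) ?_
    · exact hres.2
    · apply Filter.Eventually.of_forall
      intro θ _ h hb
      obtain ⟨hb1, hb2⟩ := hball h hb
      have hh : 0 < h := by linarith
      have hxb := hwB θ h hb
      have h1 : ‖Φ' (u h * v θ) * (u h * v θ / (p * h))‖
          = |Φ' (u h * v θ)| * (|u h * v θ| / (p * h)) := by
        rw [Real.norm_eq_abs, abs_mul, abs_div, abs_of_pos (mul_pos hp0 hh)]
      rw [h1]
      have h2 : |Φ' (u h * v θ)| ≤ 2 * c * B ^ γ := by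
        refine le_trans (hΦb _) ?_
        apply mul_le_mul_of_nonneg_left _ (mul_nonneg (by norm_num) hc.le)
        exact Real.rpow_le_rpow (abs_nonneg _) hxb hγ0.le
      have h3 : |u h * v θ| / (p * h) ≤ B / (p * (h₀/2)) := by
        apply div_le_div₀ hB0.le hxb (mul_pos hp0 (by linarith))
        exact mul_le_mul_of_nonneg_left hb1.le hp0.le
      exact mul_le_mul h2 h3 (div_nonneg (abs_nonneg _) (mul_pos hp0 hh).le)
        (mul_nonneg (mul_nonneg (by norm_num) hc.le) (Real.rpow_nonneg hB0.le _))
    · apply Filter.Eventually.of_forall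
      intro θ _ h hb
      obtain ⟨hb1, _⟩ := hball h hb
      have hh : 0 < h := by linarith
      exact (hΦd (u h * v θ)).comp h (hwd θ h hh)
  -- the coefficient r
  set r : ℝ := β₂ / (p * β₁) - 1/q with hrdef
  have h1q : 1/q = 1 - 1/p := by linarith
  have hrneg : r < 0 := by
    rw [hrdef, sub_neg]
    rw [div_lt_div_iff₀ (by positivity) hq0]
    nlinarith
  refine ⟨max (h₁ + 1) 1, (1/q - β₂/(p * β₁)) * c₃, ?_, ?_⟩
  · have hx : (1/q - β₂/(p * β₁)) = -r := by rw [hrdef]; ring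
    rw [hx]
    exact mul_pos (by linarith) hc₃
  intro h hh
  have hh1 : h₁ + 1 ≤ h := le_trans (le_max_left _ _) hh
  have hh2 : (1:ℝ) ≤ h := le_trans (le_max_right _ _) hh
  have hh0 : (0:ℝ) < h := by linarith
  have hhh₁ : h₁ ≤ h := by linarith
  -- second derivative formula
  set I₂ : ℝ := ∫ θ in (0:ℝ)..(2 * πp), Φ' (u h * v θ) * (u h * v θ / (p * h)) with hI₂def
  have hgd : HasDerivAt (fun y => 1 / (p * y) * K y)
      (-p / (p * h)^2 * K h + 1 / (p * h) * I₂) h := by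
    have hg1 : HasDerivAt (fun y : ℝ => 1 / (p * y)) (-p / (p * h)^2) h := by
      have h1 : HasDerivAt (fun y : ℝ => p * y) p h := by
        simpa using (hasDerivAt_id h).const_mul p
      have := h1.inv (by positivity : p * h ≠ 0)
      rw [show (fun y : ℝ => 1 / (p * y)) = (fun y => p * y)⁻¹ from by ext y; simp [one_div]]
      exact this
    exact hg1.mul (hKd h hh2)
  have hd2 : deriv (deriv Fbar) h = -p / (p * h)^2 * K h + 1 / (p * h) * I₂ := by
    have hev : deriv Fbar =ᶠ[nhds h] (fun y => 1 / (p * y) * K y) := by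
      filter_upwards [eventually_gt_nhds (show h₁ < h by linarith)] with y hy
      exact hKF y hy.le
    rw [hev.deriv_eq]
    exact hgd.deriv
  -- bound I₂
  have hI₂b : I₂ ≤ (1 + β₂/β₁) / (p * h) * K h := by
    have hpt : ∀ θ ∈ Set.Icc (0:ℝ) (2 * πp),
        Φ' (u h * v θ) * (u h * v θ / (p * h))
          ≤ (1 + β₂/β₁) / (p * h) * ((u h * v θ) * f (u h * v θ)) := by
      intro θ _
      have hph : (0:ℝ) < p * h := mul_pos hp0 hh0
      calc Φ' (u h * v θ) * (u h * v θ / (p * h))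
          = (Φ' (u h * v θ) * (u h * v θ)) / (p * h) := by ring
        _ ≤ ((1 + β₂/β₁) * ((u h * v θ) * f (u h * v θ))) / (p * h) :=
            (div_le_div_iff_of_pos_right hph).mpr (hptx _)
        _ = (1 + β₂/β₁) / (p * h) * ((u h * v θ) * f (u h * v θ)) := by ring
    have hmono := intervalIntegral.integral_mono_on (μ := MeasureTheory.volume)
      (by linarith : (0:ℝ) ≤ 2 * πp)
      ((hcontθ' h).intervalIntegrable _ _)
      ((continuous_const.mul (hcontθ h)).intervalIntegrable _ _) hpt
    rw [hI₂def]
    refine le_trans hmono ?_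
    simp only [Pi.mul_apply]
    rw [intervalIntegral.integral_const_mul]
  -- conclusion part 1
  have hpart1 : deriv (deriv Fbar) h ≤ r * h⁻¹ * deriv Fbar h := by
    rw [hd2, hKF h hhh₁]
    have hstep : 1 / (p * h) * I₂ ≤ 1 / (p * h) * ((1 + β₂/β₁) / (p * h) * K h) :=
      mul_le_mul_of_nonneg_left hI₂b (one_div_pos.mpr (mul_pos hp0 hh0)).le
    have hid : ∀ k : ℝ, -p / (p * h)^2 * k + 1 / (p * h) * ((1 + β₂/β₁) / (p * h) * k)
        = r * h⁻¹ * (1 / (p * h) * k) := by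
      intro k
      apply aux_id p h k (β₂/β₁) r hp0.ne' hh0.ne'
      rw [hrdef, h1q, div_div, mul_comm β₁ p]
    calc -p / (p * h)^2 * K h + 1 / (p * h) * I₂
        ≤ -p / (p * h)^2 * K h + 1 / (p * h) * ((1 + β₂/β₁) / (p * h) * K h) :=
          add_le_add (le_refl _) hstep
      _ = r * h⁻¹ * (1 / (p * h) * K h) := hid (K h)
  refine ⟨hpart1, ?_⟩
  -- conclusion part 2
  have hlow := hFlow h hhh₁
  have hstep2 : r * h⁻¹ * deriv Fbar h ≤ r * h⁻¹ * (c₃ * h ^ (-1 + (γ + 1) / p)) := by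
    apply mul_le_mul_of_nonpos_left hlow
    have : 0 < h⁻¹ := by positivity
    exact mul_nonpos_iff.mpr (Or.inr ⟨hrneg.le, this.le⟩)
  have hid2 : r * h⁻¹ * (c₃ * h ^ (-1 + (γ + 1) / p))
      = -((1/q - β₂/(p * β₁)) * c₃) * h ^ (-2 + (γ + 1) / p) := by
    have hrw : h⁻¹ * h ^ (-1 + (γ + 1) / p) = h ^ (-2 + (γ + 1) / p) := by
      rw [← Real.rpow_neg_one h, ← Real.rpow_add hh0]
      congr 1
      ring
    have : r * h⁻¹ * (c₃ * h ^ (-1 + (γ + 1) / p))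
        = (r * c₃) * (h⁻¹ * h ^ (-1 + (γ + 1) / p)) := by ring
    rw [this, hrw, hrdef]
    ring
  calc deriv (deriv Fbar) h ≤ r * h⁻¹ * deriv Fbar h := hpart1
    _ ≤ r * h⁻¹ * (c₃ * h ^ (-1 + (γ + 1) / p)) := hstep2
    _ = -((1/q - β₂/(p * β₁)) * c₃) * h ^ (-2 + (γ + 1) / p) := hid2
end

section
/- Suppose h : [1,4] → ℝ is implicitly defined by F̄'(h(λ)) = ω^p δ λ where F̄ is C⁵ and satisfies |F̄^{(k)}(h)| ≤ C h^{-k+(γ+1)/p} for 2 ≤ k ≤ 5 and F̄''(h) ≤ −c h^{-2+(γ+1)/p} for large h (c, C > 0). Then |∂_λ^k h(λ)| ≤ C' h(λ) for 0 ≤ k ≤ 4 and δ small, with C' independent of δ. -/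
open Set Filter Topology

private lemma itDW_congr_set {f : ℝ → ℝ} {s t : Set ℝ} {x : ℝ} (h : s =ᶠ[nhds x] t) (n : ℕ) :
    iteratedDerivWithin n f s x = iteratedDerivWithin n f t x := by
  simp only [iteratedDerivWithin]
  rw [iteratedFDerivWithin_congr_set h]

private lemma itD_eq_itDW {f : ℝ → ℝ} {s : Set ℝ} {x : ℝ} (hs : s ∈ nhds x) (n : ℕ) :
    iteratedDeriv n f x = iteratedDerivWithin n f s x := by
  rw [← iteratedDerivWithin_univ]
  exact (itDW_congr_set (by rwa [Filter.eventuallyEq_univ]) n).symm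

private lemma deriv_helper {F : ℝ → ℝ} {E : ℝ} (m b : ℝ) {s : Set ℝ} {l : ℝ}
    (hU : UniqueDiffWithinAt ℝ s l) (hl : l ∈ s) (Hc : HasDerivWithinAt F E s l)
    (hFs : ∀ t ∈ s, F t = m * t + b) : E = m := by
  have h1 : HasDerivWithinAt (fun t : ℝ => m * t + b) E s l :=
    Hc.congr (fun t ht => (hFs t ht).symm) ((hFs l hl).symm)
  have h2 : HasDerivWithinAt (fun t : ℝ => m * t + b) m s l := by
    simpa using (((hasDerivAt_id l).const_mul m).add_const b).hasDerivWithinAt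
  rw [← h1.derivWithin hU, h2.derivWithin hU]

private lemma hB_aux {F : ℝ → ℝ} {h₀ : ℝ} (hF : ContDiffOn ℝ 5 F (Ioi h₀)) {k : ℕ}
    (hk : k ≤ 4) {x : ℝ} (hx : h₀ < x) :
    HasDerivAt (iteratedDeriv k F) (iteratedDeriv (k+1) F x) x := by
  have hO : IsOpen (Ioi h₀) := isOpen_Ioi
  have hxm : Ioi h₀ ∈ 𝓝 x := hO.mem_nhds hx
  have h1 : DifferentiableOn ℝ (iteratedDerivWithin k F (Ioi h₀)) (Ioi h₀) :=
    hF.differentiableOn_iteratedDerivWithin (by exact_mod_cast Nat.lt_succ_of_le hk)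
      hO.uniqueDiffOn
  have hev : iteratedDeriv k F =ᶠ[𝓝 x] iteratedDerivWithin k F (Ioi h₀) :=
    Filter.eventuallyEq_of_mem hxm (fun y hy => itD_eq_itDW (hO.mem_nhds hy) k)
  have hd : DifferentiableAt ℝ (iteratedDeriv k F) x :=
    hev.differentiableAt_iff.2 ((h1 x hx).differentiableAt hxm)
  have := hd.hasDerivAt
  rwa [iteratedDeriv_succ]

private lemma boundary_aux {f : ℝ → ℝ} (hf : ContDiffOn ℝ 4 f (Icc 1 4)) {z : ℝ}
    (hz : z ∈ Icc (1:ℝ) 4) {k : ℕ} (hk : k ≤ 3) :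
    iteratedDeriv (k+1) f z = 0 ∨
      iteratedDeriv (k+1) f z = iteratedDerivWithin (k+1) f (Icc 1 4) z := by
  have hU : UniqueDiffOn ℝ (Icc (1:ℝ) 4) := uniqueDiffOn_Icc (by norm_num)
  set s : Set ℝ := Icc (1:ℝ) 4 with hs
  by_cases hdiff : DifferentiableAt ℝ (iteratedDeriv k f) z
  · right
    have hint : ∀ x ∈ Ioo (1:ℝ) 4, iteratedDeriv k f x = iteratedDerivWithin k f s x :=
      fun x hx => itD_eq_itDW (Icc_mem_nhds hx.1 hx.2) k
    have hne : (𝓝[Ioo (1:ℝ) 4] z).NeBot := by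
      refine mem_closure_iff_nhdsWithin_neBot.1 ?_
      rw [closure_Ioo (by norm_num : (1:ℝ) ≠ 4)]
      exact hz
    have hWc : ContinuousWithinAt (iteratedDerivWithin k f s) s z :=
      (hf.continuousOn_iteratedDerivWithin (by exact_mod_cast hk.trans (by norm_num)) hU) z hz
    have hGW : iteratedDeriv k f z = iteratedDerivWithin k f s z := by
      have h1 : Tendsto (iteratedDeriv k f) (𝓝[Ioo (1:ℝ) 4] z)
          (𝓝 (iteratedDeriv k f z)) := hdiff.continuousAt.continuousWithinAt
      have h2 : Tendsto (iteratedDerivWithin k f s) (𝓝[Ioo (1:ℝ) 4] z)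
          (𝓝 (iteratedDeriv k f z)) := by
        refine h1.congr' ?_
        filter_upwards [eventually_mem_nhdsWithin] with x hx using hint x hx
      have h3 : Tendsto (iteratedDerivWithin k f s) (𝓝[Ioo (1:ℝ) 4] z)
          (𝓝 (iteratedDerivWithin k f s z)) := hWc.mono Ioo_subset_Icc_self
      exact tendsto_nhds_unique h2 h3
    have hmemIns : insert z (Ioo (1:ℝ) 4) ∈ 𝓝[s] z := by
      rcases eq_or_lt_of_le hz.1 with h1 | h1
      · refine mem_nhdsWithin.2 ⟨Iio 4, isOpen_Iio, by rw [← h1]; norm_num, ?_⟩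
        rintro y ⟨hy1, hy2⟩
        rcases eq_or_lt_of_le hy2.1 with h2 | h2
        · exact Or.inl (h2.symm.trans h1)
        · exact Or.inr ⟨h2, hy1⟩
      rcases eq_or_lt_of_le hz.2 with h4 | h4
      · refine mem_nhdsWithin.2 ⟨Ioi 1, isOpen_Ioi, by rw [h4]; norm_num, ?_⟩
        rintro y ⟨hy1, hy2⟩
        rcases eq_or_lt_of_le hy2.2 with h2 | h2
        · exact Or.inl (h2.trans h4.symm)
        · exact Or.inr ⟨hy1, h2⟩
      · refine mem_nhdsWithin.2 ⟨Ioo 1 4, isOpen_Ioo, ⟨h1, h4⟩, ?_⟩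
        rintro y ⟨hy1, _⟩
        exact Or.inr hy1
    have hWd : HasDerivWithinAt (iteratedDerivWithin k f s)
        (iteratedDerivWithin (k+1) f s z) s z := by
      have h5 : DifferentiableWithinAt ℝ (iteratedDerivWithin k f s) s z :=
        (hf.differentiableOn_iteratedDerivWithin (by exact_mod_cast Nat.lt_succ_of_le hk) hU) z hz
      have h6 := h5.hasDerivWithinAt
      rwa [← iteratedDerivWithin_succ] at h6
    have hGd : HasDerivWithinAt (iteratedDerivWithin k f s) (deriv (iteratedDeriv k f) z) s z := by
      refine (hdiff.hasDerivAt.hasDerivWithinAt).congr_of_eventuallyEq ?_ hGW.symm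
      refine Filter.eventuallyEq_of_mem hmemIns ?_
      rintro y (rfl | hy)
      · exact hGW.symm
      · exact (hint y hy).symm
    rw [iteratedDeriv_succ, ← hWd.derivWithin (hU z hz), ← hGd.derivWithin (hU z hz)]
  · left
    rw [iteratedDeriv_succ]
    exact deriv_zero_of_not_differentiableAt hdiff

private lemma bounds_core (c C c₄ K1 K2 K3 K4 a P mu A2 A3 A4 A5 b1 b2 b3 b4 : ℝ)
    (hc : 0 < c) (hC : 0 < C) (hc4 : 0 ≤ c₄) (ha : 0 < a) (hP : 0 < P) (hmu : 0 < mu)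
    (hK1 : K1 = c₄ / c) (hK2 : K2 = C * (K1 * K1) / c)
    (hK3 : K3 = C * (K1*K1*K1 + 3*(K1*K2)) / c)
    (hK4 : K4 = C * (K1*K1*K1*K1 + 6*(K1*K1*K2) + 3*(K2*K2) + 4*(K1*K3)) / c)
    (hmu1 : mu ≤ c₄ * (P * a))
    (habs2 : c * P ≤ |A2|)
    (m3 : |A3| * (a*a) ≤ C * (P*a))
    (m4 : |A4| * (a*a*a) ≤ C * (P*a))
    (m5 : |A5| * (a*a*a*a) ≤ C * (P*a))
    (I1 : A2 * b1 = mu)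
    (I2 : A3 * (b1*b1) + A2 * b2 = 0)
    (I3 : A4 * (b1*b1*b1) + 3*(A3*(b1*b2)) + A2 * b3 = 0)
    (I4 : A5 * (b1*b1*b1*b1) + 6*(A4*(b1*b1*b2)) + 3*(A3*(b2*b2)) + 4*(A3*(b1*b3))
      + A2 * b4 = 0) :
    |b1| ≤ K1*a ∧ |b2| ≤ K2*a ∧ |b3| ≤ K3*a ∧ |b4| ≤ K4*a := by
  have hK1p : 0 ≤ K1 := by rw [hK1]; positivity
  have lever : ∀ x y : ℝ, x * P ≤ y * P → x ≤ y := fun x y hxy => le_of_mul_le_mul_right hxy hP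
  have key2 : ∀ (A u v Ka Kb : ℝ), |A| * (a*a) ≤ C*(P*a) → |u| ≤ Ka*a → |v| ≤ Kb*a →
      0 ≤ Ka → 0 ≤ Kb → |A*(u*v)| ≤ (Ka*Kb)*(C*(P*a)) := by
    intro A u v Ka Kb hA hu hv hKa hKb
    rw [abs_mul, abs_mul]
    calc |A| *(|u| * |v|) ≤ |A| *((Ka*a)*(Kb*a)) :=
          mul_le_mul_of_nonneg_left
            (mul_le_mul hu hv (abs_nonneg _) (by positivity)) (abs_nonneg _)
      _ = (Ka*Kb)*(|A| *(a*a)) := by ring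
      _ ≤ (Ka*Kb)*(C*(P*a)) := mul_le_mul_of_nonneg_left hA (by positivity)
  have key3 : ∀ (A u v w Ka Kb Kc : ℝ), |A| * (a*a*a) ≤ C*(P*a) → |u| ≤ Ka*a → |v| ≤ Kb*a →
      |w| ≤ Kc*a → 0 ≤ Ka → 0 ≤ Kb → 0 ≤ Kc → |A*(u*v*w)| ≤ (Ka*Kb*Kc)*(C*(P*a)) := by
    intro A u v w Ka Kb Kc hA hu hv hw hKa hKb hKc
    rw [abs_mul, abs_mul, abs_mul]
    calc |A| *(|u| * |v| * |w|) ≤ |A| *((Ka*a)*(Kb*a)*(Kc*a)) := by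
          refine mul_le_mul_of_nonneg_left ?_ (abs_nonneg _)
          exact mul_le_mul (mul_le_mul hu hv (abs_nonneg _) (by positivity)) hw
            (abs_nonneg _) (by positivity)
      _ = (Ka*Kb*Kc)*(|A| *(a*a*a)) := by ring
      _ ≤ (Ka*Kb*Kc)*(C*(P*a)) := mul_le_mul_of_nonneg_left hA (by positivity)
  have key4 : ∀ (A u v w z Ka Kb Kc Kd : ℝ), |A| * (a*a*a*a) ≤ C*(P*a) → |u| ≤ Ka*a →
      |v| ≤ Kb*a → |w| ≤ Kc*a → |z| ≤ Kd*a → 0 ≤ Ka → 0 ≤ Kb → 0 ≤ Kc → 0 ≤ Kd →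
      |A*(u*v*w*z)| ≤ (Ka*Kb*Kc*Kd)*(C*(P*a)) := by
    intro A u v w z Ka Kb Kc Kd hA hu hv hw hz hKa hKb hKc hKd
    rw [abs_mul, abs_mul, abs_mul, abs_mul]
    calc |A| *(|u| * |v| * |w| * |z|) ≤ |A| *((Ka*a)*(Kb*a)*(Kc*a)*(Kd*a)) := by
          refine mul_le_mul_of_nonneg_left ?_ (abs_nonneg _)
          exact mul_le_mul (mul_le_mul (mul_le_mul hu hv (abs_nonneg _) (by positivity)) hw
            (abs_nonneg _) (by positivity)) hz (abs_nonneg _) (by positivity)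
      _ = (Ka*Kb*Kc*Kd)*(|A| *(a*a*a*a)) := by ring
      _ ≤ (Ka*Kb*Kc*Kd)*(C*(P*a)) := mul_le_mul_of_nonneg_left hA (by positivity)
  have hb1 : |b1| ≤ K1*a := by
    have h1 : |A2| * |b1| = mu := by rw [← abs_mul, I1]; exact abs_of_pos hmu
    have h2 : c*P* |b1| ≤ |A2| * |b1| := mul_le_mul_of_nonneg_right habs2 (abs_nonneg _)
    rw [hK1, div_mul_eq_mul_div, le_div_iff₀ hc]
    refine lever _ _ ?_
    calc |b1| * c * P = c * P * |b1| := by ring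
      _ ≤ |A2| * |b1| := h2
      _ = mu := h1
      _ ≤ c₄ * (P * a) := hmu1
      _ = c₄ * a * P := by ring
  have hK2p : 0 ≤ K2 := by rw [hK2]; positivity
  have hb2 : |b2| ≤ K2*a := by
    have e2 : A2 * b2 = -(A3 * (b1*b1)) := by linear_combination I2
    have h1 : |A2| * |b2| ≤ (K1*K1)*(C*(P*a)) := by
      rw [← abs_mul, e2, abs_neg]
      exact key2 A3 b1 b1 K1 K1 m3 hb1 hb1 hK1p hK1p
    have h2 : c*P* |b2| ≤ |A2| * |b2| := mul_le_mul_of_nonneg_right habs2 (abs_nonneg _)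
    rw [hK2, div_mul_eq_mul_div, le_div_iff₀ hc]
    refine lever _ _ ?_
    calc |b2| * c * P = c * P * |b2| := by ring
      _ ≤ |A2| * |b2| := h2
      _ ≤ K1 * K1 * (C * (P * a)) := h1
      _ = C * (K1 * K1) * a * P := by ring
  have hK3p : 0 ≤ K3 := by rw [hK3]; positivity
  have hb3 : |b3| ≤ K3*a := by
    have e3 : A2 * b3 = -(A4*(b1*b1*b1) + 3*(A3*(b1*b2))) := by linear_combination I3
    have t1 : |A4*(b1*b1*b1)| ≤ (K1*K1*K1)*(C*(P*a)) :=
      key3 A4 b1 b1 b1 K1 K1 K1 m4 hb1 hb1 hb1 hK1p hK1p hK1p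
    have t2 : |A3*(b1*b2)| ≤ (K1*K2)*(C*(P*a)) := key2 A3 b1 b2 K1 K2 m3 hb1 hb2 hK1p hK2p
    have h1 : |A2| * |b3| ≤ (K1*K1*K1)*(C*(P*a)) + 3*((K1*K2)*(C*(P*a))) := by
      rw [← abs_mul, e3, abs_neg]
      calc |A4*(b1*b1*b1) + 3*(A3*(b1*b2))| ≤ |A4*(b1*b1*b1)| + |3*(A3*(b1*b2))| := abs_add_le _ _
        _ = |A4*(b1*b1*b1)| + 3* |A3*(b1*b2)| := by rw [abs_mul (3:ℝ)]; norm_num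
        _ ≤ (K1*K1*K1)*(C*(P*a)) + 3*((K1*K2)*(C*(P*a))) := by linarith
    have h2 : c*P* |b3| ≤ |A2| * |b3| := mul_le_mul_of_nonneg_right habs2 (abs_nonneg _)
    rw [hK3, div_mul_eq_mul_div, le_div_iff₀ hc]
    refine lever _ _ ?_
    calc |b3| * c * P = c * P * |b3| := by ring
      _ ≤ |A2| * |b3| := h2
      _ ≤ K1 * K1 * K1 * (C * (P * a)) + 3 * (K1 * K2 * (C * (P * a))) := h1
      _ = C * (K1 * K1 * K1 + 3 * (K1 * K2)) * a * P := by ring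
  have hb4 : |b4| ≤ K4*a := by
    have e4 : A2 * b4 = -(A5*(b1*b1*b1*b1) + 6*(A4*(b1*b1*b2)) + 3*(A3*(b2*b2))
        + 4*(A3*(b1*b3))) := by linear_combination I4
    have t1 : |A5*(b1*b1*b1*b1)| ≤ (K1*K1*K1*K1)*(C*(P*a)) :=
      key4 A5 b1 b1 b1 b1 K1 K1 K1 K1 m5 hb1 hb1 hb1 hb1 hK1p hK1p hK1p hK1p
    have t2 : |A4*(b1*b1*b2)| ≤ (K1*K1*K2)*(C*(P*a)) :=
      key3 A4 b1 b1 b2 K1 K1 K2 m4 hb1 hb1 hb2 hK1p hK1p hK2p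
    have t3 : |A3*(b2*b2)| ≤ (K2*K2)*(C*(P*a)) := key2 A3 b2 b2 K2 K2 m3 hb2 hb2 hK2p hK2p
    have t4 : |A3*(b1*b3)| ≤ (K1*K3)*(C*(P*a)) := key2 A3 b1 b3 K1 K3 m3 hb1 hb3 hK1p hK3p
    have h1 : |A2| * |b4| ≤ (K1*K1*K1*K1)*(C*(P*a)) + 6*((K1*K1*K2)*(C*(P*a)))
        + 3*((K2*K2)*(C*(P*a))) + 4*((K1*K3)*(C*(P*a))) := by
      rw [← abs_mul, e4, abs_neg]
      calc |A5*(b1*b1*b1*b1) + 6*(A4*(b1*b1*b2)) + 3*(A3*(b2*b2)) + 4*(A3*(b1*b3))|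
          ≤ |A5*(b1*b1*b1*b1)| + |6*(A4*(b1*b1*b2))| + |3*(A3*(b2*b2))| + |4*(A3*(b1*b3))| := by
            refine le_trans (abs_add_le _ _) ?_
            refine add_le_add (le_trans (abs_add_le _ _) ?_) le_rfl
            exact add_le_add (abs_add_le _ _) le_rfl
        _ = |A5*(b1*b1*b1*b1)| + 6* |A4*(b1*b1*b2)| + 3* |A3*(b2*b2)| + 4* |A3*(b1*b3)| := by
            rw [abs_mul (6:ℝ), abs_mul (3:ℝ), abs_mul (4:ℝ)]; norm_num
        _ ≤ _ := by linarith
    have h2 : c*P* |b4| ≤ |A2| * |b4| := mul_le_mul_of_nonneg_right habs2 (abs_nonneg _)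
    rw [hK4, div_mul_eq_mul_div, le_div_iff₀ hc]
    refine lever _ _ ?_
    calc |b4| * c * P = c * P * |b4| := by ring
      _ ≤ |A2| * |b4| := h2
      _ ≤ K1 * K1 * K1 * K1 * (C * (P * a)) + 6 * (K1 * K1 * K2 * (C * (P * a)))
          + 3 * (K2 * K2 * (C * (P * a))) + 4 * (K1 * K3 * (C * (P * a))) := h1
      _ = C * (K1 * K1 * K1 * K1 + 6 * (K1 * K1 * K2) + 3 * (K2 * K2) + 4 * (K1 * K3)) * a * P := by ring
  exact ⟨hb1, hb2, hb3, hb4⟩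

set_option maxHeartbeats 1000000 in
/-- derivative bounds `|∂_λ^k h(λ)| ≤ C' h(λ)` for the implicitly
defined frequency-action function. -/
theorem stmt_13 (p γ ω c C c₃ c₄ h₀ δ₁ : ℝ) (hp : 2 ≤ p) (hγ0 : 0 < γ)
    (hγ1 : γ < 1 / (p - 1)) (hω : 0 < ω) (hc : 0 < c) (hC : 0 < C)
    (hc₃ : 0 < c₃) (hc₄ : c₃ ≤ c₄) (hδ₁ : 0 < δ₁) (hh₀ : 0 < h₀)
    (Fbar : ℝ → ℝ) (hF : ContDiffOn ℝ 5 Fbar (Set.Ioi h₀))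
    (hup : ∀ x ≥ h₀, ∀ k : ℕ, 2 ≤ k → k ≤ 5 →
      |iteratedDeriv k Fbar x| ≤ C * x ^ (-(k:ℝ) + (γ + 1) / p))
    (hdown : ∀ x ≥ h₀, iteratedDeriv 2 Fbar x ≤ -c * x ^ (-2 + (γ + 1) / p))
    (hfirst : ∀ x ≥ h₀, c₃ * x ^ (-1 + (γ + 1) / p) ≤ deriv Fbar x ∧
      deriv Fbar x ≤ c₄ * x ^ (-1 + (γ + 1) / p))
    (h : ℝ → ℝ → ℝ)
    (hsm : ∀ δ : ℝ, 0 < δ → δ < δ₁ → ContDiffOn ℝ 4 (h δ) (Set.Icc 1 4))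
    (hdef : ∀ δ : ℝ, 0 < δ → δ < δ₁ → ∀ lam ∈ Set.Icc (1:ℝ) 4,
      deriv Fbar (h δ lam) = ω ^ p * δ * lam ∧ h₀ ≤ h δ lam) :
    ∃ C' δ₀ : ℝ, 0 < C' ∧ 0 < δ₀ ∧ δ₀ ≤ δ₁ ∧
      ∀ δ : ℝ, 0 < δ → δ < δ₀ → ∀ lam ∈ Set.Icc (1:ℝ) 4, ∀ k : ℕ, k ≤ 4 →
        |iteratedDeriv k (h δ) lam| ≤ C' * h δ lam := by
  have hωp : 0 < ω ^ p := Real.rpow_pos_of_pos hω p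
  have hc4p : 0 < c₄ := lt_of_lt_of_le hc₃ hc₄
  set E : ℝ := (γ + 1) / p with hE
  set K1 : ℝ := c₄ / c with hK1
  set K2 : ℝ := C * (K1 * K1) / c with hK2
  set K3 : ℝ := C * (K1*K1*K1 + 3*(K1*K2)) / c with hK3
  set K4 : ℝ := C * (K1*K1*K1*K1 + 6*(K1*K1*K2) + 3*(K2*K2) + 4*(K1*K3)) / c with hK4
  have hK1p : 0 < K1 := by rw [hK1]; positivity
  have hK2p : 0 < K2 := by rw [hK2]; positivity
  have hK3p : 0 < K3 := by rw [hK3]; positivity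
  have hK4p : 0 < K4 := by rw [hK4]; positivity
  have hUs : UniqueDiffOn ℝ (Icc (1:ℝ) 4) := uniqueDiffOn_Icc (by norm_num)
  refine ⟨1 + K1 + K2 + K3 + K4, min δ₁ (c₃ * h₀ ^ (-1 + E) / (8 * ω ^ p)),
    by positivity, lt_min hδ₁ (by positivity), min_le_left _ _, ?_⟩
  intro δ hδ0 hδδ₀ lam hlam k hk4
  have hδ1 : δ < δ₁ := lt_of_lt_of_le hδδ₀ (min_le_left _ _)
  set g : ℝ → ℝ := h δ with hgdef
  have hg : ContDiffOn ℝ 4 g (Icc 1 4) := hsm δ hδ0 hδ1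
  have hdefs : ∀ l ∈ Icc (1:ℝ) 4, deriv Fbar (g l) = ω ^ p * δ * l ∧ h₀ ≤ g l :=
    hdef δ hδ0 hδ1
  -- h₀ < g l
  have hgt : ∀ l ∈ Icc (1:ℝ) 4, h₀ < g l := by
    intro l hl
    rcases (hdefs l hl).2.lt_or_eq with hlt | heq2
    · exact hlt
    · exfalso
      have h1 := (hfirst h₀ le_rfl).1
      have h2 : deriv Fbar h₀ = ω ^ p * δ * l := by
        rw [heq2]; exact (hdefs l hl).1
      have h3 : δ * (8 * ω ^ p) < c₃ * h₀ ^ (-1 + E) :=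
        (lt_div_iff₀ (by positivity)).1 (lt_of_lt_of_le hδδ₀ (min_le_right _ _))
      have h4 : ω ^ p * δ * l ≤ ω ^ p * δ * 4 :=
        mul_le_mul_of_nonneg_left hl.2 (by positivity)
      rw [h2] at h1
      linarith [mul_pos hωp hδ0]
  -- within-derivatives of g
  have hA : ∀ j : ℕ, j ≤ 3 → ∀ l ∈ Icc (1:ℝ) 4,
      HasDerivWithinAt (iteratedDerivWithin j g (Icc 1 4))
        (iteratedDerivWithin (j+1) g (Icc 1 4) l) (Icc 1 4) l := by
    intro j hj l hl
    have h1 : DifferentiableWithinAt ℝ (iteratedDerivWithin j g (Icc 1 4)) (Icc 1 4) l :=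
      (hg.differentiableOn_iteratedDerivWithin (by exact_mod_cast Nat.lt_succ_of_le hj) hUs) l hl
    have h2 := h1.hasDerivWithinAt
    rwa [← iteratedDerivWithin_succ] at h2
  have hA0 : ∀ l ∈ Icc (1:ℝ) 4,
      HasDerivWithinAt g (iteratedDerivWithin 1 g (Icc 1 4) l) (Icc 1 4) l := by
    intro l hl
    have := hA 0 (by norm_num) l hl
    rwa [iteratedDerivWithin_zero] at this
  -- identities
  have I1 : ∀ l ∈ Icc (1:ℝ) 4,
      iteratedDeriv 2 Fbar (g l) * iteratedDerivWithin 1 g (Icc 1 4) l = ω ^ p * δ := by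
    intro l hl
    have Hc := (hB_aux hF (by norm_num : (1:ℕ) ≤ 4) (hgt l hl)).comp_hasDerivWithinAt l (hA0 l hl)
    refine deriv_helper (ω ^ p * δ) 0 (hUs l hl) hl Hc ?_
    intro t ht
    simp only [Function.comp_apply, iteratedDeriv_one]
    rw [(hdefs t ht).1]
    ring
  have I2 : ∀ l ∈ Icc (1:ℝ) 4,
      iteratedDeriv 3 Fbar (g l) *
          (iteratedDerivWithin 1 g (Icc 1 4) l * iteratedDerivWithin 1 g (Icc 1 4) l) +
        iteratedDeriv 2 Fbar (g l) * iteratedDerivWithin 2 g (Icc 1 4) l = 0 := by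
    intro l hl
    have Hc := ((hB_aux hF (by norm_num : (2:ℕ) ≤ 4) (hgt l hl)).comp_hasDerivWithinAt l
        (hA0 l hl)).mul (hA 1 (by norm_num) l hl)
    have hz := deriv_helper 0 (ω ^ p * δ) (hUs l hl) hl Hc (by
      intro t ht
      simp only [Function.comp_apply, zero_mul, zero_add]
      exact I1 t ht)
    simp only [Function.comp_apply] at hz
    linear_combination hz
  have I3 : ∀ l ∈ Icc (1:ℝ) 4,
      iteratedDeriv 4 Fbar (g l) *
          (iteratedDerivWithin 1 g (Icc 1 4) l * iteratedDerivWithin 1 g (Icc 1 4) l *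
            iteratedDerivWithin 1 g (Icc 1 4) l) +
        3 * (iteratedDeriv 3 Fbar (g l) *
          (iteratedDerivWithin 1 g (Icc 1 4) l * iteratedDerivWithin 2 g (Icc 1 4) l)) +
        iteratedDeriv 2 Fbar (g l) * iteratedDerivWithin 3 g (Icc 1 4) l = 0 := by
    intro l hl
    have Hc := ((((hB_aux hF (by norm_num : (3:ℕ) ≤ 4) (hgt l hl)).comp_hasDerivWithinAt l
        (hA0 l hl)).mul (hA 1 (by norm_num) l hl)).mul (hA 1 (by norm_num) l hl)).add
        (((hB_aux hF (by norm_num : (2:ℕ) ≤ 4) (hgt l hl)).comp_hasDerivWithinAt l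
        (hA0 l hl)).mul (hA 2 (by norm_num) l hl))
    have hz := deriv_helper 0 0 (hUs l hl) hl Hc (by
      intro t ht
      simp only [Function.comp_apply, Pi.mul_apply, Pi.add_apply]
      linear_combination I2 t ht)
    simp only [Function.comp_apply, Pi.mul_apply, Pi.add_apply] at hz
    linear_combination hz
  have I4 : ∀ l ∈ Icc (1:ℝ) 4,
      iteratedDeriv 5 Fbar (g l) *
          (iteratedDerivWithin 1 g (Icc 1 4) l * iteratedDerivWithin 1 g (Icc 1 4) l *
            iteratedDerivWithin 1 g (Icc 1 4) l * iteratedDerivWithin 1 g (Icc 1 4) l) +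
        6 * (iteratedDeriv 4 Fbar (g l) *
          (iteratedDerivWithin 1 g (Icc 1 4) l * iteratedDerivWithin 1 g (Icc 1 4) l *
            iteratedDerivWithin 2 g (Icc 1 4) l)) +
        3 * (iteratedDeriv 3 Fbar (g l) *
          (iteratedDerivWithin 2 g (Icc 1 4) l * iteratedDerivWithin 2 g (Icc 1 4) l)) +
        4 * (iteratedDeriv 3 Fbar (g l) *
          (iteratedDerivWithin 1 g (Icc 1 4) l * iteratedDerivWithin 3 g (Icc 1 4) l)) +
        iteratedDeriv 2 Fbar (g l) * iteratedDerivWithin 4 g (Icc 1 4) l = 0 := by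
    intro l hl
    have T1 := ((((hB_aux hF (by norm_num : (4:ℕ) ≤ 4) (hgt l hl)).comp_hasDerivWithinAt l
        (hA0 l hl)).mul (hA 1 (by norm_num) l hl)).mul (hA 1 (by norm_num) l hl)).mul
        (hA 1 (by norm_num) l hl)
    have T2 := ((((hB_aux hF (by norm_num : (3:ℕ) ≤ 4) (hgt l hl)).comp_hasDerivWithinAt l
        (hA0 l hl)).mul (hA 1 (by norm_num) l hl)).mul
        (hA 2 (by norm_num) l hl)).const_mul (3:ℝ)
    have T3 := ((hB_aux hF (by norm_num : (2:ℕ) ≤ 4) (hgt l hl)).comp_hasDerivWithinAt l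
        (hA0 l hl)).mul (hA 3 (by norm_num) l hl)
    have Hc := (T1.add T2).add T3
    have hz := deriv_helper 0 0 (hUs l hl) hl Hc (by
      intro t ht
      simp only [Function.comp_apply, Pi.mul_apply, Pi.add_apply]
      linear_combination I3 t ht)
    simp only [Function.comp_apply, Pi.mul_apply, Pi.add_apply] at hz
    linear_combination hz
  -- pointwise quantities at lam
  have ha : 0 < g lam := lt_trans hh₀ (hgt lam hlam)
  have hah : h₀ ≤ g lam := (hdefs lam hlam).2
  have hP : 0 < g lam ^ (-2 + E) := Real.rpow_pos_of_pos ha _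
  have hpow : ∀ u : ℝ, g lam ^ u * g lam = g lam ^ (u + 1) := fun u => by
    rw [Real.rpow_add ha, Real.rpow_one]
  have hexp : ∀ u v : ℝ, u = v → g lam ^ u = g lam ^ v := fun u v huv => by rw [huv]
  have hmu1 : ω ^ p * δ ≤ c₄ * (g lam ^ (-2 + E) * g lam) := by
    have h1 := (hdefs lam hlam).1
    have h2 := (hfirst (g lam) hah).2
    have h3 : ω ^ p * δ ≤ ω ^ p * δ * lam := le_mul_of_one_le_right (by positivity) hlam.1
    have h4 : g lam ^ (-1 + E) = g lam ^ (-2 + E) * g lam := by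
      rw [hpow (-2 + E)]; exact hexp _ _ (by ring)
    rw [← h1] at h3
    rw [h4] at h2
    linarith
  have habs2 : c * g lam ^ (-2 + E) ≤ |iteratedDeriv 2 Fbar (g lam)| := by
    have h1 := hdown (g lam) hah
    calc c * g lam ^ (-2 + E) ≤ -(iteratedDeriv 2 Fbar (g lam)) := by linarith
      _ ≤ |iteratedDeriv 2 Fbar (g lam)| := neg_le_abs _
  have m3 : |iteratedDeriv 3 Fbar (g lam)| * (g lam * g lam)
      ≤ C * (g lam ^ (-2 + E) * g lam) := by
    have h1 : |iteratedDeriv 3 Fbar (g lam)| ≤ C * g lam ^ (-3 + E) := by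
      have := hup (g lam) hah 3 (by norm_num) (by norm_num)
      push_cast at this
      exact this
    calc |iteratedDeriv 3 Fbar (g lam)| * (g lam * g lam)
        ≤ (C * g lam ^ (-3 + E)) * (g lam * g lam) :=
          mul_le_mul_of_nonneg_right h1 (by positivity)
      _ = C * (g lam ^ (-3 + E) * g lam * g lam) := by ring
      _ = C * g lam ^ (-3 + E + 1 + 1) := by rw [hpow, hpow]
      _ = C * g lam ^ (-2 + E + 1) := by rw [hexp (-3 + E + 1 + 1) (-2 + E + 1) (by ring)]
      _ = C * (g lam ^ (-2 + E) * g lam) := by rw [hpow]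
  have m4 : |iteratedDeriv 4 Fbar (g lam)| * (g lam * g lam * g lam)
      ≤ C * (g lam ^ (-2 + E) * g lam) := by
    have h1 : |iteratedDeriv 4 Fbar (g lam)| ≤ C * g lam ^ (-4 + E) := by
      have := hup (g lam) hah 4 (by norm_num) (by norm_num)
      push_cast at this
      exact this
    calc |iteratedDeriv 4 Fbar (g lam)| * (g lam * g lam * g lam)
        ≤ (C * g lam ^ (-4 + E)) * (g lam * g lam * g lam) :=
          mul_le_mul_of_nonneg_right h1 (by positivity)
      _ = C * (g lam ^ (-4 + E) * g lam * g lam * g lam) := by ring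
      _ = C * g lam ^ (-4 + E + 1 + 1 + 1) := by rw [hpow, hpow, hpow]
      _ = C * g lam ^ (-2 + E + 1) := by
          rw [hexp (-4 + E + 1 + 1 + 1) (-2 + E + 1) (by ring)]
      _ = C * (g lam ^ (-2 + E) * g lam) := by rw [hpow]
  have m5 : |iteratedDeriv 5 Fbar (g lam)| * (g lam * g lam * g lam * g lam)
      ≤ C * (g lam ^ (-2 + E) * g lam) := by
    have h1 : |iteratedDeriv 5 Fbar (g lam)| ≤ C * g lam ^ (-5 + E) := by
      have := hup (g lam) hah 5 (by norm_num) (by norm_num)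
      push_cast at this
      exact this
    calc |iteratedDeriv 5 Fbar (g lam)| * (g lam * g lam * g lam * g lam)
        ≤ (C * g lam ^ (-5 + E)) * (g lam * g lam * g lam * g lam) :=
          mul_le_mul_of_nonneg_right h1 (by positivity)
      _ = C * (g lam ^ (-5 + E) * g lam * g lam * g lam * g lam) := by ring
      _ = C * g lam ^ (-5 + E + 1 + 1 + 1 + 1) := by rw [hpow, hpow, hpow, hpow]
      _ = C * g lam ^ (-2 + E + 1) := by
          rw [hexp (-5 + E + 1 + 1 + 1 + 1) (-2 + E + 1) (by ring)]
      _ = C * (g lam ^ (-2 + E) * g lam) := by rw [hpow]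
  obtain ⟨hb1, hb2, hb3, hb4⟩ := bounds_core c C c₄ K1 K2 K3 K4 (g lam)
    (g lam ^ (-2 + E)) (ω ^ p * δ)
    (iteratedDeriv 2 Fbar (g lam)) (iteratedDeriv 3 Fbar (g lam))
    (iteratedDeriv 4 Fbar (g lam)) (iteratedDeriv 5 Fbar (g lam))
    (iteratedDerivWithin 1 g (Icc 1 4) lam) (iteratedDerivWithin 2 g (Icc 1 4) lam)
    (iteratedDerivWithin 3 g (Icc 1 4) lam) (iteratedDerivWithin 4 g (Icc 1 4) lam)
    hc hC hc4p.le ha hP (by positivity) hK1 hK2 hK3 hK4 hmu1 habs2 m3 m4 m5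
    (I1 lam hlam) (I2 lam hlam) (I3 lam hlam) (I4 lam hlam)
  interval_cases k
  · rw [show iteratedDeriv 0 g = g from iteratedDeriv_zero, abs_of_pos ha]
    nth_rewrite 1 [← one_mul (g lam)]
    exact mul_le_mul_of_nonneg_right (by linarith) ha.le
  · rcases boundary_aux hg hlam (by norm_num : (0:ℕ) ≤ 3) with h0 | heq
    · simp only [Nat.reduceAdd] at h0
      rw [h0, abs_zero]; positivity
    · simp only [Nat.reduceAdd] at heq
      rw [heq]
      exact le_trans hb1 (mul_le_mul_of_nonneg_right (by linarith) ha.le)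
  · rcases boundary_aux hg hlam (by norm_num : (1:ℕ) ≤ 3) with h0 | heq
    · simp only [Nat.reduceAdd] at h0
      rw [h0, abs_zero]; positivity
    · simp only [Nat.reduceAdd] at heq
      rw [heq]
      exact le_trans hb2 (mul_le_mul_of_nonneg_right (by linarith) ha.le)
  · rcases boundary_aux hg hlam (by norm_num : (2:ℕ) ≤ 3) with h0 | heq
    · simp only [Nat.reduceAdd] at h0
      rw [h0, abs_zero]; positivity
    · simp only [Nat.reduceAdd] at heq
      rw [heq]
      exact le_trans hb3 (mul_le_mul_of_nonneg_right (by linarith) ha.le)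
  · rcases boundary_aux hg hlam (by norm_num : (3:ℕ) ≤ 3) with h0 | heq
    · simp only [Nat.reduceAdd] at h0
      rw [h0, abs_zero]; positivity
    · simp only [Nat.reduceAdd] at heq
      rw [heq]
      exact le_trans hb4 (mul_le_mul_of_nonneg_right (by linarith) ha.le)
end
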